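/- arXiv:1308.6139 — 10 statements merged into one kernel-verified Lean document; each statement's English description precedes it below -/
import Mathlib

section
/- If G is a graph, then the graph J obtained by taking two disjoint copies G1, G2 of G and two disjoint copies H1, H2 of the complement of G, and adding all edges between G1 and H1, all edges between H1 and H2, and all edges between H2 and G2, is self-complementary (i.e., J is isomorphic to its complement). -/
/-- The `P₄`-construction: two copies of `G` (indices 0, 1), two copies of the
complement of `G` (indices 2, 3); all edges between copies 0–2, 2–3, 3–1. -/
def P4Construction {V : Type*} (G : SimpleGraph V) : SimpleGraph (Fin 4 × V) :=
  SimpleGraph.fromRel (fun p q =>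
    (p.1 = q.1 ∧ (p.1 = 0 ∨ p.1 = 1) ∧ G.Adj p.2 q.2) ∨
    (p.1 = q.1 ∧ (p.1 = 2 ∨ p.1 = 3) ∧ ¬ G.Adj p.2 q.2) ∨
    (p.1 = 0 ∧ q.1 = 2) ∨ (p.1 = 2 ∧ q.1 = 3) ∨ (p.1 = 3 ∧ q.1 = 1))

def SelfComplementary {V : Type*} (G : SimpleGraph V) : Prop := Nonempty (G ≃g Gᶜ)

def p4sigma : Equiv (Fin 4) (Fin 4) :=
  ⟨![3, 2, 0, 1], ![2, 3, 1, 0], by decide, by decide⟩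

theorem p4Construction_selfComplementary {V : Type*} (G : SimpleGraph V) :
    SelfComplementary (P4Construction G) := by
  refine ⟨⟨Equiv.prodCongr p4sigma (Equiv.refl V), ?_⟩⟩
  rintro ⟨i, v⟩ ⟨j, w⟩
  have hsym : G.Adj v w ↔ G.Adj w v := ⟨fun h => h.symm, fun h => h.symm⟩
  have hirr : ¬ G.Adj v v := G.irrefl
  fin_cases i <;> fin_cases j <;>
    simp [P4Construction, p4sigma, SimpleGraph.compl_adj, SimpleGraph.fromRel_adj,
      Prod.ext_iff] <;> intros <;> tauto
end

section
/- If τ is an antimorphism of a graph G, then every cycle of τ (viewed as a permutation) has length a multiple of 4, except possibly for one fixed point. In particular τ has at most one fixed point. -/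
def IsAntimorphism {V : Type*} (G : SimpleGraph V) (τ : Equiv.Perm V) : Prop :=
  ∀ a b : V, a ≠ b → (G.Adj a b ↔ ¬ G.Adj (τ a) (τ b))

private lemma anti_pow {V : Type*} (G : SimpleGraph V) (τ : Equiv.Perm V)
    (hτ : IsAntimorphism G τ) (a b : V) (hab : a ≠ b) :
    ∀ k : ℕ, (G.Adj ((τ ^ k) a) ((τ ^ k) b) ↔
      (if Even k then G.Adj a b else ¬ G.Adj a b)) := by
  intro k
  induction k with
  | zero => simp
  | succ k ih =>
    have hne : (τ ^ k) a ≠ (τ ^ k) b := fun h => hab ((τ ^ k).injective h)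
    have h1 : G.Adj ((τ ^ (k + 1)) a) ((τ ^ (k + 1)) b) ↔
        ¬ G.Adj ((τ ^ k) a) ((τ ^ k) b) := by
      have := hτ _ _ hne
      simp only [pow_succ', Equiv.Perm.mul_apply]
      tauto
    rw [h1, ih]
    rcases Nat.even_or_odd k with h | h
    · simp [h, Nat.even_add_one]
    · simp [Nat.even_add_one, Nat.not_even_iff_odd.mpr h]

theorem antimorphism_cycle_lengths {V : Type*} [Fintype V] [DecidableEq V]
    (G : SimpleGraph V) (τ : Equiv.Perm V) (hτ : IsAntimorphism G τ) :
    (∀ x : V, τ x ≠ x → 4 ∣ (τ.cycleOf x).support.card) ∧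
    (∀ x y : V, τ x = x → τ y = y → x = y) := by
  constructor
  · intro x hx
    classical
    set c := τ.cycleOf x with hc
    have hcyc : c.IsCycle := Equiv.Perm.isCycle_cycleOf τ hx
    have hcx : c x ≠ x := by rwa [hc, Equiv.Perm.cycleOf_apply_self]
    set n := c.support.card with hn
    have horder : orderOf c = n := hcyc.orderOf
    have hpow : ∀ m : ℕ, (τ ^ m) x = x ↔ n ∣ m := by
      intro m
      rw [← Equiv.Perm.cycleOf_pow_apply_self τ x m, ← hc,
        ← hcyc.pow_eq_one_iff' hcx, ← horder, orderOf_dvd_iff_pow_eq_one]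
    have hnx : (τ ^ n) x = x := (hpow n).mpr dvd_rfl
    have hxne : x ≠ τ x := fun h => hx h.symm
    have hn2 : 2 ≤ n := hcyc.two_le_card_support
    -- n is even
    have heven : Even n := by
      by_contra hodd
      have := anti_pow G τ hτ x (τ x) hxne n
      rw [if_neg hodd, hnx] at this
      have hcomm : (τ ^ n) (τ x) = τ x := by
        have h1 : (τ ^ n) (τ x) = (τ ^ (n + 1)) x := by
          rw [pow_succ, Equiv.Perm.mul_apply]
        have h2 : (τ ^ (n + 1)) x = τ ((τ ^ n) x) := by
          rw [pow_succ', Equiv.Perm.mul_apply]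
        rw [h1, h2, hnx]
      rw [hcomm] at this
      tauto
    obtain ⟨m, hm⟩ := heven
    have hnm : n = 2 * m := by omega
    -- m is even
    have hmpos : 0 < m := by omega
    have hmx : (τ ^ m) x ≠ x := by
      intro h
      rw [hpow m] at h
      have := Nat.le_of_dvd hmpos h
      omega
    have hmeven : Even m := by
      by_contra hodd
      have key := anti_pow G τ hτ x ((τ ^ m) x) (fun h => hmx h.symm) m
      rw [if_neg hodd] at key
      have h2m : (τ ^ m) ((τ ^ m) x) = x := by
        rw [← Equiv.Perm.mul_apply, ← pow_add, hpow]
        exact hm ▸ dvd_rfl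
      rw [h2m] at key
      have hsymm := G.adj_comm ((τ ^ m) x) x
      tauto
    obtain ⟨j, hj⟩ := hmeven
    exact ⟨j, by omega⟩
  · intro x y hx hy
    by_contra hne
    have := hτ x y hne
    rw [hx, hy] at this
    tauto
end

section
/- Let G be a self-complementary graph with an antimorphism τ containing a cycle (a_1 b_1 c_1 d_1 a_2 b_2 c_2 d_2 ... a_k b_k c_k d_k) of length 4k. Then either there exists i such that {a_1, b_1, a_i, b_i} induces a P_4 for which (a_1 b_1 a_i b_i) is an antimorphism of the induced subgraph, or there exists i such that {a_1, b_1, c_i, d_i} induces a P_4 for which (a_1 b_1 c_i d_i) is an antimorphism of the induced subgraph. -/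
/-- `s` induces a path on 4 vertices in `G`. -/
def InducesP4 {V : Type*} (G : SimpleGraph V) (s : Set V) : Prop :=
  ∃ w x y z : V, s = {w, x, y, z} ∧ w ≠ x ∧ w ≠ y ∧ w ≠ z ∧ x ≠ y ∧ x ≠ z ∧ y ≠ z ∧
    G.Adj w x ∧ G.Adj x y ∧ G.Adj y z ∧ ¬ G.Adj w y ∧ ¬ G.Adj w z ∧ ¬ G.Adj x z

/-- The cyclic permutation `(p q r s)` (as a function). -/
def cyc4 {V : Type*} [DecidableEq V] (p q r s : V) : V → V :=
  fun v => if v = p then q else if v = q then r else if v = r then s else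
    if v = s then p else v

/-- `{p,q,r,s}` induces a `P₄` for which the cyclic permutation `(p q r s)` is an
antimorphism of the induced subgraph. -/
def IsP4Antimorphic {V : Type*} [DecidableEq V] (G : SimpleGraph V) (p q r s : V) : Prop :=
  InducesP4 G {p, q, r, s} ∧
  ∀ x ∈ ({p, q, r, s} : Set V), ∀ y ∈ ({p, q, r, s} : Set V), x ≠ y →
    (G.Adj x y ↔ ¬ G.Adj (cyc4 p q r s x) (cyc4 p q r s y))

lemma gibbs_seteq1 {V : Type*} (p q r s : V) : ({p, q, r, s} : Set V) = {q, p, r, s} := by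
  ext x; simp [Set.mem_insert_iff]; tauto
lemma gibbs_seteq2 {V : Type*} (p q r s : V) : ({p, q, r, s} : Set V) = {p, q, s, r} := by
  ext x; simp [Set.mem_insert_iff]; tauto
lemma gibbs_seteq3 {V : Type*} (p q r s : V) : ({p, q, r, s} : Set V) = {q, r, p, s} := by
  ext x; simp [Set.mem_insert_iff]; tauto
lemma gibbs_seteq4 {V : Type*} (p q r s : V) : ({p, q, r, s} : Set V) = {r, q, s, p} := by
  ext x; simp [Set.mem_insert_iff]; tauto

set_option maxHeartbeats 1000000 in
lemma gibbs_quad {V : Type*} [DecidableEq V] (G : SimpleGraph V) (p q r s : V)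
    (hpq : p ≠ q) (hpr : p ≠ r) (hps : p ≠ s) (hqr : q ≠ r) (hqs : q ≠ s) (hrs : r ≠ s)
    (h1 : G.Adj p q ↔ G.Adj r s) (h2 : G.Adj q r ↔ G.Adj s p)
    (h3 : ¬(G.Adj p q ↔ G.Adj q r)) (h4 : G.Adj p r ↔ ¬ G.Adj q s) :
    IsP4Antimorphic G p q r s := by
  have s1 := G.adj_comm p q
  have s2 := G.adj_comm p r
  have s3 := G.adj_comm p s
  have s4 := G.adj_comm q r
  have s5 := G.adj_comm q s
  have s6 := G.adj_comm r s
  have c1 : cyc4 p q r s p = q := by simp [cyc4]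
  have c2 : cyc4 p q r s q = r := by simp [cyc4, hpq.symm]
  have c3 : cyc4 p q r s r = s := by simp [cyc4, hpr.symm, hqr.symm]
  have c4 : cyc4 p q r s s = p := by simp [cyc4, hps.symm, hqs.symm, hrs.symm]
  have i1 : G.Adj p q ↔ ¬ G.Adj q r := (not_iff_comm.mp (not_iff.mp h3)).symm
  have h2' : G.Adj q r ↔ G.Adj p s := h2.trans s3.symm
  have h3b : ¬(G.Adj q r ↔ G.Adj r s) := fun h => h3 (h1.trans h.symm)
  have i2 : G.Adj q r ↔ ¬ G.Adj r s := (not_iff_comm.mp (not_iff.mp h3b)).symm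
  have i3 : G.Adj r s ↔ ¬ G.Adj p s := iff_not_comm.mp (h2'.symm.trans i2)
  have i4 : G.Adj p s ↔ ¬ G.Adj p q := h2'.symm.trans (iff_not_comm.mp i1)
  have i6 : G.Adj q s ↔ ¬ G.Adj p r := iff_not_comm.mp h4
  constructor
  · by_cases e0 : G.Adj p q <;> by_cases F : G.Adj p r
    · have nA4 : ¬ G.Adj q r := i1.mp e0
      have nA5 : ¬ G.Adj q s := h4.mp F
      have nA3 : ¬ G.Adj p s := fun h => (i4.mp h) e0
      exact ⟨q, p, r, s, gibbs_seteq1 p q r s,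
        hpq.symm, hqr, hqs, hpr, hps, hrs,
        s1.mp e0, F, h1.mp e0, nA4, nA5, nA3⟩
    · have nA4 : ¬ G.Adj q r := i1.mp e0
      have nA3 : ¬ G.Adj p s := fun h => (i4.mp h) e0
      have A5 : G.Adj q s := by by_contra h; exact F (h4.mpr h)
      exact ⟨p, q, s, r, gibbs_seteq2 p q r s,
        hpq, hps, hpr, hqs, hqr, hrs.symm,
        e0, A5, s6.mp (h1.mp e0), nA3, F, nA4⟩
    · have A4 : G.Adj q r := by
        by_contra h; exact h3 ⟨fun h' => absurd h' e0, fun h' => absurd h' h⟩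
      have A3 : G.Adj p s := h2'.mp A4
      have nA5 : ¬ G.Adj q s := h4.mp F
      have nA6 : ¬ G.Adj r s := i2.mp A4
      exact ⟨q, r, p, s, gibbs_seteq3 p q r s,
        hqr, hpq.symm, hqs, hpr.symm, hrs, hps,
        A4, s2.mp F, A3, fun h => e0 (s1.mpr h), nA5, nA6⟩
    · have A4 : G.Adj q r := by
        by_contra h; exact h3 ⟨fun h' => absurd h' e0, fun h' => absurd h' h⟩
      have A5 : G.Adj q s := by by_contra h; exact F (h4.mpr h)
      have nA6 : ¬ G.Adj r s := i2.mp A4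
      exact ⟨r, q, s, p, gibbs_seteq4 p q r s,
        hqr.symm, hrs, hpr.symm, hqs, hpq.symm, hps.symm,
        s4.mp A4, A5, h2.mp A4, nA6, fun h => F (s2.mpr h), fun h => e0 (s1.mpr h)⟩
  · intro x hx y hy hxy
    simp only [Set.mem_insert_iff, Set.mem_singleton_iff] at hx hy
    rcases hx with rfl | rfl | rfl | rfl <;> rcases hy with rfl | rfl | rfl | rfl <;>
      simp only [c1, c2, c3, c4, ← s1, ← s2, ← s3,
        ← s4, ← s5, ← s6] <;>
      first
        | exact absurd rfl hxy
        | exact i1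
        | exact i2
        | exact i3
        | exact i4
        | exact h4
        | exact i6

set_option maxHeartbeats 1000000 in
/-- Gibbs' lemma: given an antimorphism with a cycle
`(a₀ b₀ c₀ d₀ a₁ b₁ c₁ d₁ … a_{k-1} b_{k-1} c_{k-1} d_{k-1})`, either some
`{a₀, b₀, aᵢ, bᵢ}` induces a `P₄` with `(a₀ b₀ aᵢ bᵢ)` as antimorphism, or some
`{a₀, b₀, cᵢ, dᵢ}` induces a `P₄` with `(a₀ b₀ cᵢ dᵢ)` as antimorphism. -/
theorem gibbs_lemma {V : Type*} [DecidableEq V] (G : SimpleGraph V) (τ : Equiv.Perm V)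
    (hτ : IsAntimorphism G τ) (k : ℕ) (hk : 1 ≤ k) (a b c d : ZMod k → V)
    (hinj : Function.Injective (fun p : Fin 4 × ZMod k => ![a, b, c, d] p.1 p.2))
    (hab : ∀ i, τ (a i) = b i) (hbc : ∀ i, τ (b i) = c i)
    (hcd : ∀ i, τ (c i) = d i) (hda : ∀ i, τ (d i) = a (i + 1)) :
    (∃ i : ZMod k, IsP4Antimorphic G (a 0) (b 0) (a i) (b i)) ∨
    (∃ i : ZMod k, IsP4Antimorphic G (a 0) (b 0) (c i) (d i)) := by
  haveI : NeZero k := ⟨by omega⟩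
  classical
  -- distinctness facts
  have key : ∀ (m n : Fin 4) (i j : ZMod k),
      ![a,b,c,d] m i = ![a,b,c,d] n j → (m, i) = (n, j) := fun m n i j h => hinj h
  have nAB : ∀ i j, a i ≠ b j := fun i j h => by
    have := key 0 1 i j (by simpa using h); simp at this
  have nAC : ∀ i j, a i ≠ c j := fun i j h => by
    have := key 0 2 i j (by simpa using h); simp at this
  have nAD : ∀ i j, a i ≠ d j := fun i j h => by
    have := key 0 3 i j (by simpa using h); simp at this
  have nBC : ∀ i j, b i ≠ c j := fun i j h => by
    have := key 1 2 i j (by simpa using h); simp at this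
  have nBD : ∀ i j, b i ≠ d j := fun i j h => by
    have := key 1 3 i j (by simpa using h); simp at this
  have nCD : ∀ i j, c i ≠ d j := fun i j h => by
    have := key 2 3 i j (by simpa using h); simp at this
  have nDA : ∀ i j, d i ≠ a j := fun i j h => (nAD j i) h.symm
  have nAA : ∀ i j : ZMod k, i ≠ j → a i ≠ a j := fun i j hij h => by
    have := key 0 0 i j (by simpa using h); simp at this; exact hij this
  have nBB : ∀ i j : ZMod k, i ≠ j → b i ≠ b j := fun i j hij h => by
    have := key 1 1 i j (by simpa using h); simp at this; exact hij this
  -- the shift lemma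
  have gstep : ∀ (i j : ZMod k), G.Adj (a j) (b i) ↔ G.Adj (a (j+1)) (b (i+1)) := by
    intro i j
    have h1 := hτ (a j) (b i) (nAB j i); rw [hab, hbc] at h1
    have h2 := hτ (b j) (c i) (nBC j i); rw [hbc, hcd] at h2
    have h3 := hτ (c j) (d i) (nCD j i); rw [hcd, hda] at h3
    have h4 := hτ (d j) (a (i+1)) (nDA j (i+1)); rw [hda, hab] at h4
    tauto
  have gshiftN : ∀ (n : ℕ) (i j : ZMod k),
      G.Adj (a j) (b i) ↔ G.Adj (a (j + n)) (b (i + n)) := by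
    intro n
    induction n with
    | zero => intro i j; simp
    | succ m ih =>
      intro i j
      have e1 : (j + ((m+1 : ℕ) : ZMod k)) = (j + (m : ℕ)) + 1 := by push_cast; ring
      have e2 : (i + ((m+1 : ℕ) : ZMod k)) = (i + (m : ℕ)) + 1 := by push_cast; ring
      rw [e1, e2, ← gstep, ih]
  have gshift : ∀ i j : ZMod k, G.Adj (a j) (b i) ↔ G.Adj (a 0) (b (i - j)) := by
    intro i j
    have hv : (((-j).val : ℕ) : ZMod k) = -j := ZMod.natCast_rightInverse _
    have := gshiftN ((-j).val) i j
    rw [this, show j + (((-j).val : ℕ) : ZMod k) = 0 by rw [hv]; ring,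
      show i + (((-j).val : ℕ) : ZMod k) = i - j by rw [hv]; ring]
  -- abbreviation facts
  have gAB : ∀ i : ZMod k, G.Adj (a i) (b i) ↔ G.Adj (a 0) (b 0) := by
    intro i; have := gshift i i; rwa [sub_self] at this
  by_cases hc : ∃ i : ZMod k,
      (G.Adj (a 0) (b i) ↔ G.Adj (a 0) (b 0)) ∧
      (G.Adj (a 0) (b (-i-1)) ↔ G.Adj (a 0) (b 0))
  · right
    obtain ⟨i, hi, hi'⟩ := hc
    refine ⟨i, gibbs_quad G _ _ _ _ (nAB 0 0) (nAC 0 i) (nAD 0 i) (nBC 0 i) (nBD 0 i)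
      (nCD i i) ?_ ?_ ?_ ?_⟩
    · have t1 := hτ (a i) (b i) (nAB i i); rw [hab, hbc] at t1
      have t2 := hτ (b i) (c i) (nBC i i); rw [hbc, hcd] at t2
      have t3 := gAB i
      tauto
    · have t4 := hτ (a 0) (b i) (nAB 0 i); rw [hab, hbc] at t4
      have t5 := hτ (d i) (a 0) (nDA i 0); rw [hda, hab] at t5
      have t6 := gshift 0 (i+1)
      rw [show (0 : ZMod k) - (i+1) = -i-1 by ring] at t6
      tauto
    · have t4 := hτ (a 0) (b i) (nAB 0 i); rw [hab, hbc] at t4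
      tauto
    · have t7 := hτ (a 0) (c i) (nAC 0 i); rw [hab, hcd] at t7
      exact t7
  by_cases hd : ∃ i : ZMod k, i ≠ 0 ∧
      ¬(G.Adj (a 0) (b i) ↔ G.Adj (a 0) (b 0)) ∧
      ¬(G.Adj (a 0) (b (-i)) ↔ G.Adj (a 0) (b 0))
  · left
    obtain ⟨i, hi0, hi, hi'⟩ := hd
    refine ⟨i, gibbs_quad G _ _ _ _ (nAB 0 0) (nAA 0 i (Ne.symm hi0)) (nAB 0 i)
      ((nAB i 0).symm) (nBB 0 i (Ne.symm hi0)) (nAB i i) ?_ ?_ ?_ ?_⟩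
    · have := gAB i; tauto
    · have u1 : G.Adj (b 0) (a i) ↔ G.Adj (a i) (b 0) := G.adj_comm _ _
      have u2 : G.Adj (a i) (b 0) ↔ G.Adj (a 0) (b (0 - i)) := gshift 0 i
      rw [zero_sub] at u2
      have u3 : G.Adj (b i) (a 0) ↔ G.Adj (a 0) (b i) := G.adj_comm _ _
      tauto
    · have u1 : G.Adj (b 0) (a i) ↔ G.Adj (a i) (b 0) := G.adj_comm _ _
      have u2 : G.Adj (a i) (b 0) ↔ G.Adj (a 0) (b (0 - i)) := gshift 0 i
      rw [zero_sub] at u2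
      tauto
    · have t8 := hτ (a 0) (a i) (nAA 0 i (Ne.symm hi0)); rw [hab, hab] at t8
      exact t8
  · exfalso
    have hc' : ∀ i : ZMod k, (G.Adj (a 0) (b i) ↔ G.Adj (a 0) (b 0)) →
        ¬(G.Adj (a 0) (b (-i-1)) ↔ G.Adj (a 0) (b 0)) := fun i h1 h2 => hc ⟨i, h1, h2⟩
    have hd' : ∀ i : ZMod k, i ≠ 0 → ¬(G.Adj (a 0) (b i) ↔ G.Adj (a 0) (b 0)) →
        (G.Adj (a 0) (b (-i)) ↔ G.Adj (a 0) (b 0)) := by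
      intro i h0 h1
      by_contra h2
      exact hd ⟨i, h0, h1, h2⟩
    have claim : ∀ n : ℕ, n < k →
        (G.Adj (a 0) (b ((n : ℕ) : ZMod k)) ↔ G.Adj (a 0) (b 0)) := by
      intro n
      induction n with
      | zero => intro _; simp
      | succ m ih =>
        intro hlt
        have hm := ih (by omega)
        have hz := hc' _ hm
        by_cases hsplit : G.Adj (a 0) (b ((m+1 : ℕ) : ZMod k)) ↔ G.Adj (a 0) (b 0)
        · exact hsplit
        · have hne : ((m+1 : ℕ) : ZMod k) ≠ 0 := by
            intro h
            rw [ZMod.natCast_eq_zero_iff] at h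
            have := Nat.le_of_dvd (by omega) h
            omega
          have hcontra := hd' _ hne hsplit
          rw [show -(((m+1:ℕ)) : ZMod k) = -((m:ℕ) : ZMod k) - 1 by push_cast; ring] at hcontra
          exact absurd hcontra hz
    have hlast := claim (k-1) (by omega)
    rw [show (((k-1 : ℕ)) : ZMod k) = -1 by
      rw [Nat.cast_sub hk, ZMod.natCast_self, Nat.cast_one, zero_sub]] at hlast
    have hfin := hc' 0 Iff.rfl
    rw [show (-(0:ZMod k)-1) = -1 by ring] at hfin
    exact hfin hlast
end

section
/- Let G be a self-complementary graph with an antimorphism τ containing a cycle (a_1 b_1 c_1 d_1 ... a_k b_k c_k d_k). Set A = {a_1,...,a_k}, B = {b_1,...,b_k}, C = {c_1,...,c_k}, D = {d_1,...,d_k}. Then either (i) there exist i, j such that {a_1, b_i, a_{1+j}, b_{i+j}} induces a P_4 for which (a_1 b_i a_{1+j} b_{i+j}) is an antimorphism, or (ii) (A,B,C,D) is a symmetric partition of G[A∪B∪C∪D], or (iii) (B,C,D,A) is a symmetric partition of G[A∪B∪C∪D]. -/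
/-- `(A,B,C,D)` is a symmetric partition of the subgraph of `G` induced by `A ∪ B ∪ C ∪ D`:
four nonempty pairwise disjoint sets, all edges between `A,B` and between `C,D`, no edges
between `A,D` nor between `B,C`. -/
def IsSymmetricPartitionOn {V : Type*} (G : SimpleGraph V) (A B C D : Set V) : Prop :=
  A.Nonempty ∧ B.Nonempty ∧ C.Nonempty ∧ D.Nonempty ∧
  Disjoint A B ∧ Disjoint A C ∧ Disjoint A D ∧ Disjoint B C ∧ Disjoint B D ∧ Disjoint C D ∧
  (∀ x ∈ A, ∀ y ∈ B, G.Adj x y) ∧ (∀ x ∈ C, ∀ y ∈ D, G.Adj x y) ∧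
  (∀ x ∈ A, ∀ y ∈ D, ¬ G.Adj x y) ∧ (∀ x ∈ B, ∀ y ∈ C, ¬ G.Adj x y)

open Classical in
lemma zmod_config {k : ℕ} [NeZero k] (F : ZMod k → Prop) (u v : ZMod k)
    (hu : F u) (hv : ¬ F v) :
    ∃ i j : ZMod k, j ≠ 0 ∧
      ((F i ∧ ¬ F (i + j) ∧ ¬ F (i - j)) ∨ (¬ F i ∧ F (i + j) ∧ F (i - j))) := by
  have hk0 : k ≠ 0 := NeZero.ne k
  have hk2 : 2 ≤ k := by
    rcases Nat.lt_or_ge k 2 with h | h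
    · interval_cases k
      · exact absurd rfl hk0
      · exact absurd hu (by rwa [Subsingleton.elim u v])
    · exact h
  have hex : ∃ n : ℕ, ¬ F (u + n) := by
    refine ⟨(v - u).val, ?_⟩
    have : u + ((v - u).val : ZMod k) = v := by
      simp [ZMod.natCast_val, ZMod.cast_id]
    rwa [this]
  obtain ⟨w, hw, hw1⟩ : ∃ w : ZMod k, F w ∧ ¬ F (w + 1) := by
    set n₀ := Nat.find hex with hn₀def
    have hn₀ : ¬ F (u + (n₀ : ZMod k)) := Nat.find_spec hex
    have hpos : 1 ≤ n₀ := by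
      rcases Nat.eq_zero_or_pos n₀ with h | h
      · exfalso; apply hn₀; rw [h]; simpa using hu
      · exact h
    have hprev : F (u + ((n₀ - 1 : ℕ) : ZMod k)) := by
      by_contra h
      exact Nat.find_min hex (m := n₀ - 1) (by omega) h
    refine ⟨u + ((n₀ - 1 : ℕ) : ZMod k), hprev, ?_⟩
    have : u + ((n₀ - 1 : ℕ) : ZMod k) + 1 = u + (n₀ : ZMod k) := by
      have : ((n₀ - 1 : ℕ) : ZMod k) + 1 = (n₀ : ZMod k) := by
        have := Nat.sub_add_cancel hpos
        calc ((n₀ - 1 : ℕ) : ZMod k) + 1 = (((n₀ - 1) + 1 : ℕ) : ZMod k) := by push_cast; ring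
        _ = (n₀ : ZMod k) := by rw [this]
      rw [add_assoc, this]
    rwa [this]
  have hexℓ : ∃ t : ℕ, 1 ≤ t ∧ (¬ F (w - t) ∨ F (w + 1 + t)) := by
    refine ⟨k - 1, by omega, Or.inr ?_⟩
    have : ((k - 1 : ℕ) : ZMod k) = -1 := by
      have : (((k - 1) + 1 : ℕ) : ZMod k) = 0 := by
        rw [Nat.sub_add_cancel (by omega)]; simp
      push_cast at this
      linear_combination this
    rw [this]
    simpa using hw
  set ℓ := Nat.find hexℓ with hℓdef
  obtain ⟨hℓ1, hℓcase⟩ : 1 ≤ ℓ ∧ (¬ F (w - ℓ) ∨ F (w + 1 + ℓ)) := Nat.find_spec hexℓ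
  have hmin : ∀ t : ℕ, t < ℓ → 1 ≤ t → F (w - t) ∧ ¬ F (w + 1 + t) := by
    intro t ht h1
    have := Nat.find_min hexℓ ht
    push_neg at this
    exact this h1
  have hup : ∀ t : ℕ, t < ℓ → ¬ F (w + 1 + t) := by
    intro t ht
    rcases Nat.eq_zero_or_pos t with h | h
    · subst h; simpa using hw1
    · exact (hmin t ht h).2
  have hdn : ∀ t : ℕ, t < ℓ → F (w - t) := by
    intro t ht
    rcases Nat.eq_zero_or_pos t with h | h
    · subst h; simpa using hw
    · exact (hmin t ht h).1
  have hℓk : ℓ ≤ k - 1 := Nat.find_min' hexℓ ⟨by omega, by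
    refine Or.inr ?_
    have : ((k - 1 : ℕ) : ZMod k) = -1 := by
      have : (((k - 1) + 1 : ℕ) : ZMod k) = 0 := by
        rw [Nat.sub_add_cancel (by omega)]; simp
      push_cast at this
      linear_combination this
    rw [this]
    simpa using hw⟩
  have hjne : ((ℓ : ℕ) : ZMod k) ≠ 0 := by
    intro h0
    rw [ZMod.natCast_eq_zero_iff] at h0
    have hdvd := h0
    have := Nat.le_of_dvd (by omega) hdvd
    omega
  have hcast : ((ℓ : ℕ) : ZMod k) = ((ℓ - 1 : ℕ) : ZMod k) + 1 := by
    have h := Nat.sub_add_cancel hℓ1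
    calc ((ℓ : ℕ) : ZMod k) = (((ℓ - 1) + 1 : ℕ) : ZMod k) := by rw [h]
    _ = ((ℓ - 1 : ℕ) : ZMod k) + 1 := by push_cast; ring
  rcases hℓcase with hA | hB
  · refine ⟨w, (ℓ : ZMod k), hjne, Or.inl ⟨hw, ?_, hA⟩⟩
    have : w + ((ℓ : ℕ) : ZMod k) = w + 1 + ((ℓ - 1 : ℕ) : ZMod k) := by
      rw [hcast]; ring
    rw [this]
    exact hup (ℓ - 1) (by omega)
  · refine ⟨w + 1, (ℓ : ZMod k), hjne, Or.inr ⟨hw1, hB, ?_⟩⟩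
    have : w + 1 - ((ℓ : ℕ) : ZMod k) = w - ((ℓ - 1 : ℕ) : ZMod k) := by
      rw [hcast]; ring
    rw [this]
    exact hdn (ℓ - 1) (by omega)

lemma cyc4_anti {V : Type*} [DecidableEq V] (G : SimpleGraph V) (p q r s : V)
    (hpq : p ≠ q) (hpr : p ≠ r) (hps : p ≠ s) (hqr : q ≠ r) (hqs : q ≠ s) (hrs : r ≠ s)
    (c1 : G.Adj p q ↔ ¬ G.Adj q r) (c2 : G.Adj p r ↔ ¬ G.Adj q s)
    (c3 : G.Adj p s ↔ ¬ G.Adj q p) (c4 : G.Adj q r ↔ ¬ G.Adj r s)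
    (c5 : G.Adj q s ↔ ¬ G.Adj r p) (c6 : G.Adj r s ↔ ¬ G.Adj s p) :
    ∀ x ∈ ({p, q, r, s} : Set V), ∀ y ∈ ({p, q, r, s} : Set V), x ≠ y →
      (G.Adj x y ↔ ¬ G.Adj (cyc4 p q r s x) (cyc4 p q r s y)) := by
  have evp : cyc4 p q r s p = q := by simp [cyc4]
  have evq : cyc4 p q r s q = r := by simp [cyc4, hpq.symm]
  have evr : cyc4 p q r s r = s := by simp [cyc4, hpr.symm, hqr.symm]
  have evs : cyc4 p q r s s = p := by simp [cyc4, hps.symm, hqs.symm, hrs.symm]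
  have e1 : G.Adj p q ↔ ¬ G.Adj (cyc4 p q r s p) (cyc4 p q r s q) := by
    rw [evp, evq]; exact c1
  have e2 : G.Adj p r ↔ ¬ G.Adj (cyc4 p q r s p) (cyc4 p q r s r) := by
    rw [evp, evr]; exact c2
  have e3 : G.Adj p s ↔ ¬ G.Adj (cyc4 p q r s p) (cyc4 p q r s s) := by
    rw [evp, evs]; exact c3
  have e4 : G.Adj q p ↔ ¬ G.Adj (cyc4 p q r s q) (cyc4 p q r s p) := by
    rw [evq, evp, G.adj_comm q p, G.adj_comm r q]; exact c1
  have e5 : G.Adj q r ↔ ¬ G.Adj (cyc4 p q r s q) (cyc4 p q r s r) := by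
    rw [evq, evr]; exact c4
  have e6 : G.Adj q s ↔ ¬ G.Adj (cyc4 p q r s q) (cyc4 p q r s s) := by
    rw [evq, evs]; exact c5
  have e7 : G.Adj r p ↔ ¬ G.Adj (cyc4 p q r s r) (cyc4 p q r s p) := by
    rw [evr, evp, G.adj_comm r p, G.adj_comm s q]; exact c2
  have e8 : G.Adj r q ↔ ¬ G.Adj (cyc4 p q r s r) (cyc4 p q r s q) := by
    rw [evr, evq, G.adj_comm r q, G.adj_comm s r]; exact c4
  have e9 : G.Adj r s ↔ ¬ G.Adj (cyc4 p q r s r) (cyc4 p q r s s) := by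
    rw [evr, evs]; exact c6
  have e10 : G.Adj s p ↔ ¬ G.Adj (cyc4 p q r s s) (cyc4 p q r s p) := by
    rw [evs, evp, G.adj_comm s p, G.adj_comm p q]; exact c3
  have e11 : G.Adj s q ↔ ¬ G.Adj (cyc4 p q r s s) (cyc4 p q r s q) := by
    rw [evs, evq, G.adj_comm s q, G.adj_comm p r]; exact c5
  have e12 : G.Adj s r ↔ ¬ G.Adj (cyc4 p q r s s) (cyc4 p q r s r) := by
    rw [evs, evr, G.adj_comm s r, G.adj_comm p s]; exact c6
  rintro x (rfl | rfl | rfl | rfl) y (rfl | rfl | rfl | rfl) hxy <;>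
    first
      | exact absurd rfl hxy
      | exact e1 | exact e2 | exact e3 | exact e4 | exact e5 | exact e6
      | exact e7 | exact e8 | exact e9 | exact e10 | exact e11 | exact e12

set_option maxHeartbeats 1600000 in
theorem main_lemma {V : Type*} [DecidableEq V] (G : SimpleGraph V) (τ : Equiv.Perm V)
    (hτ : IsAntimorphism G τ) (k : ℕ) (hk : 1 ≤ k) (a b c d : ZMod k → V)
    (hinj : Function.Injective (fun p : Fin 4 × ZMod k => ![a, b, c, d] p.1 p.2))
    (hab : ∀ i, τ (a i) = b i) (hbc : ∀ i, τ (b i) = c i)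
    (hcd : ∀ i, τ (c i) = d i) (hda : ∀ i, τ (d i) = a (i + 1)) :
    (∃ i j : ZMod k, IsP4Antimorphic G (a 0) (b i) (a j) (b (i + j))) ∨
    IsSymmetricPartitionOn G (Set.range a) (Set.range b) (Set.range c) (Set.range d) ∨
    IsSymmetricPartitionOn G (Set.range b) (Set.range c) (Set.range d) (Set.range a) := by
  haveI : NeZero k := ⟨by omega⟩
  have key : ∀ (L M : Fin 4) (i j : ZMod k),
      ![a, b, c, d] L i = ![a, b, c, d] M j → L = M ∧ i = j := by
    intro L M i j h
    have h2 : (L, i) = (M, j) := hinj (a₁ := (L, i)) (a₂ := (M, j)) h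
    exact ⟨congrArg Prod.fst h2, congrArg Prod.snd h2⟩
  have e0 : (![a, b, c, d] : Fin 4 → ZMod k → V) 0 = a := rfl
  have e1 : (![a, b, c, d] : Fin 4 → ZMod k → V) 1 = b := rfl
  have e2 : (![a, b, c, d] : Fin 4 → ZMod k → V) 2 = c := rfl
  have e3 : (![a, b, c, d] : Fin 4 → ZMod k → V) 3 = d := rfl
  have inj_a : ∀ {i j}, a i = a j → i = j := fun {i j} h => (key 0 0 i j h).2
  have inj_b : ∀ {i j}, b i = b j → i = j := fun {i j} h => (key 1 1 i j h).2
  have inj_c : ∀ {i j}, c i = c j → i = j := fun {i j} h => (key 2 2 i j h).2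
  have inj_d : ∀ {i j}, d i = d j → i = j := fun {i j} h => (key 3 3 i j h).2
  have ne_ab : ∀ i j, a i ≠ b j := fun i j h => absurd (key 0 1 i j h).1 (by decide)
  have ne_ac : ∀ i j, a i ≠ c j := fun i j h => absurd (key 0 2 i j h).1 (by decide)
  have ne_ad : ∀ i j, a i ≠ d j := fun i j h => absurd (key 0 3 i j h).1 (by decide)
  have ne_bc : ∀ i j, b i ≠ c j := fun i j h => absurd (key 1 2 i j h).1 (by decide)
  have ne_bd : ∀ i j, b i ≠ d j := fun i j h => absurd (key 1 3 i j h).1 (by decide)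
  have ne_cd : ∀ i j, c i ≠ d j := fun i j h => absurd (key 2 3 i j h).1 (by decide)
  -- transfers along τ
  have t_ab : ∀ i j, G.Adj (a i) (b j) ↔ ¬ G.Adj (b i) (c j) := fun i j => by
    have := hτ (a i) (b j) (ne_ab i j); rwa [hab, hbc] at this
  have t_bc : ∀ i j, G.Adj (b i) (c j) ↔ ¬ G.Adj (c i) (d j) := fun i j => by
    have := hτ (b i) (c j) (ne_bc i j); rwa [hbc, hcd] at this
  have t_cd : ∀ i j, G.Adj (c i) (d j) ↔ ¬ G.Adj (d i) (a (j + 1)) := fun i j => by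
    have := hτ (c i) (d j) (ne_cd i j); rwa [hcd, hda] at this
  have t_da : ∀ i j, G.Adj (d i) (a j) ↔ ¬ G.Adj (a (i + 1)) (b j) := fun i j => by
    have := hτ (d i) (a j) (fun h => ne_ad j i h.symm); rwa [hda, hab] at this
  have t_aa : ∀ i j, i ≠ j → (G.Adj (a i) (a j) ↔ ¬ G.Adj (b i) (b j)) := fun i j hij => by
    have := hτ (a i) (a j) (fun h => hij (inj_a h)); rwa [hab, hab] at this
  have t_bb : ∀ i j, i ≠ j → (G.Adj (b i) (b j) ↔ ¬ G.Adj (c i) (c j)) := fun i j hij => by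
    have := hτ (b i) (b j) (fun h => hij (inj_b h)); rwa [hbc, hbc] at this
  have t_cc : ∀ i j, i ≠ j → (G.Adj (c i) (c j) ↔ ¬ G.Adj (d i) (d j)) := fun i j hij => by
    have := hτ (c i) (c j) (fun h => hij (inj_c h)); rwa [hcd, hcd] at this
  have t_dd : ∀ i j, i ≠ j → (G.Adj (d i) (d j) ↔ ¬ G.Adj (a (i + 1)) (a (j + 1))) :=
    fun i j hij => by
      have := hτ (d i) (d j) (fun h => hij (inj_d h)); rwa [hda, hda] at this
  -- shifts
  have sh1 : ∀ i j, G.Adj (a i) (b j) ↔ G.Adj (a (i + 1)) (b (j + 1)) := fun i j => by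
    have h1 := t_ab i j; have h2 := t_bc i j; have h3 := t_cd i j; have h4 := t_da i (j + 1)
    rw [h1, h2, h3, h4]; simp only [not_not]
  have shn : ∀ (n : ℕ) (i j : ZMod k), G.Adj (a i) (b j) ↔ G.Adj (a (i + n)) (b (j + n)) := by
    intro n
    induction n with
    | zero => intro i j; simp
    | succ m ih =>
      intro i j
      rw [ih i j, sh1 (i + m) (j + m)]
      have hm : ((m + 1 : ℕ) : ZMod k) = (m : ZMod k) + 1 := by push_cast; ring
      rw [hm, ← add_assoc, ← add_assoc]
  have fAB : ∀ i j, G.Adj (a i) (b j) ↔ G.Adj (a 0) (b (j - i)) := fun i j => by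
    have h := shn (-i).val i j
    have hv : (((-i).val : ℕ) : ZMod k) = -i := by
      simp [ZMod.natCast_val, ZMod.cast_id]
    rw [hv] at h
    have h1 : i + -i = 0 := by ring
    have h2 : j + -i = j - i := by ring
    rw [h1, h2] at h
    exact h
  have sh1aa : ∀ i j, i ≠ j → (G.Adj (a i) (a j) ↔ G.Adj (a (i + 1)) (a (j + 1))) := by
    intro i j hij
    have h1 := t_aa i j hij; have h2 := t_bb i j hij; have h3 := t_cc i j hij
    have h4 := t_dd i j hij
    rw [h1, h2, h3, h4]; simp only [not_not]
  have shnaa : ∀ (n : ℕ) (i j : ZMod k), i ≠ j →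
      (G.Adj (a i) (a j) ↔ G.Adj (a (i + n)) (a (j + n))) := by
    intro n
    induction n with
    | zero => intro i j _; simp
    | succ m ih =>
      intro i j hij
      have hijm : i + m ≠ j + m := fun h => hij (add_right_cancel h)
      rw [ih i j hij, sh1aa (i + m) (j + m) hijm]
      have hm : ((m + 1 : ℕ) : ZMod k) = (m : ZMod k) + 1 := by push_cast; ring
      rw [hm, ← add_assoc, ← add_assoc]
  have fAA : ∀ i j, i ≠ j → (G.Adj (a i) (a j) ↔ G.Adj (a 0) (a (j - i))) := by
    intro i j hij
    have h := shnaa (-i).val i j hij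
    have hv : (((-i).val : ℕ) : ZMod k) = -i := by
      simp [ZMod.natCast_val, ZMod.cast_id]
    rw [hv] at h
    have h1 : i + -i = 0 := by ring
    have h2 : j + -i = j - i := by ring
    rw [h1, h2] at h
    exact h
  -- derived adjacency translations
  have acd : ∀ i j, G.Adj (c i) (d j) ↔ G.Adj (a i) (b j) := fun i j => by
    have h1 := t_ab i j; have h2 := t_bc i j
    rw [h1, h2]; simp only [not_not]
  have hda_f : ∀ i j, G.Adj (d i) (a j) ↔ ¬ G.Adj (a i) (b (j - 1)) := fun i j => by
    have h1 := t_cd i (j - 1)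
    have h3 : j - 1 + 1 = j := by ring
    rw [h3] at h1
    have h2 := acd i (j - 1)
    rw [← h2, h1]; simp only [not_not]
  have dis : ∀ {f g : ZMod k → V}, (∀ i j, f i ≠ g j) →
      Disjoint (Set.range f) (Set.range g) := by
    intro f g h
    rw [Set.disjoint_left]
    rintro x ⟨i, rfl⟩ ⟨j, hj⟩
    exact h i j hj.symm
  by_cases hall : ∀ t, G.Adj (a 0) (b t)
  · -- case (ii)
    right; left
    refine ⟨⟨a 0, 0, rfl⟩, ⟨b 0, 0, rfl⟩, ⟨c 0, 0, rfl⟩, ⟨d 0, 0, rfl⟩,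
      dis ne_ab, dis ne_ac, dis ne_ad, dis ne_bc, dis ne_bd, dis ne_cd, ?_, ?_, ?_, ?_⟩
    · rintro x ⟨i, rfl⟩ y ⟨j, rfl⟩
      rw [fAB]; exact hall _
    · rintro x ⟨i, rfl⟩ y ⟨j, rfl⟩
      rw [acd, fAB]; exact hall _
    · rintro x ⟨i, rfl⟩ y ⟨j, rfl⟩
      rw [G.adj_comm, hda_f, not_not, fAB]
      exact hall _
    · rintro x ⟨i, rfl⟩ y ⟨j, rfl⟩
      exact (t_ab i j).mp ((fAB i j).mpr (hall _))
  by_cases hnone : ∀ t, ¬ G.Adj (a 0) (b t)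
  · -- case (iii)
    right; right
    refine ⟨⟨b 0, 0, rfl⟩, ⟨c 0, 0, rfl⟩, ⟨d 0, 0, rfl⟩, ⟨a 0, 0, rfl⟩,
      dis ne_bc, dis ne_bd, dis (fun i j => (ne_ab j i).symm), dis ne_cd,
      dis (fun i j => (ne_ac j i).symm), dis (fun i j => (ne_ad j i).symm), ?_, ?_, ?_, ?_⟩
    · rintro x ⟨i, rfl⟩ y ⟨j, rfl⟩
      by_contra h
      exact hnone _ ((fAB i j).mp ((t_ab i j).mpr h))
    · rintro x ⟨i, rfl⟩ y ⟨j, rfl⟩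
      exact (hda_f i j).mpr (fun h => hnone _ ((fAB i (j - 1)).mp h))
    · rintro x ⟨i, rfl⟩ y ⟨j, rfl⟩
      rw [G.adj_comm]
      exact fun h => hnone _ ((fAB j i).mp h)
    · rintro x ⟨i, rfl⟩ y ⟨j, rfl⟩
      rw [acd]
      exact fun h => hnone _ ((fAB i j).mp h)
  -- case (i)
  left
  obtain ⟨t0, ht0⟩ := not_forall.mp hall
  obtain ⟨s0, hs0⟩ : ∃ t, G.Adj (a 0) (b t) := by
    push_neg at hnone; exact hnone
  obtain ⟨i, j, hj0, hcfg⟩ :=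
    zmod_config (fun t => G.Adj (a 0) (b t)) s0 t0 hs0 ht0
  refine ⟨i, j, ?_⟩
  have hij_ne : i ≠ i + j := fun h => hj0 (by rwa [left_eq_add] at h)
  have h0j_ne : (0 : ZMod k) ≠ j := fun h => hj0 h.symm
  -- adjacency translations for the four vertices
  have Ars : G.Adj (a j) (b (i + j)) ↔ G.Adj (a 0) (b i) := by
    have h := fAB j (i + j)
    have : i + j - j = i := by ring
    rwa [this] at h
  have Aqr : G.Adj (b i) (a j) ↔ G.Adj (a 0) (b (i - j)) := by
    rw [G.adj_comm]; exact fAB j i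
  have Aqs : G.Adj (b i) (b (i + j)) ↔ ¬ G.Adj (a 0) (a j) := by
    have h1 := t_aa i (i + j) hij_ne
    have h2 := fAA i (i + j) hij_ne
    have : i + j - i = j := by ring
    rw [this] at h2
    rw [← h2, h1, not_not]
  -- distinctness of the four vertices
  have hpq : a 0 ≠ b i := ne_ab 0 i
  have hpr : a 0 ≠ a j := fun h => h0j_ne (inj_a h)
  have hps : a 0 ≠ b (i + j) := ne_ab 0 (i + j)
  have hqr : b i ≠ a j := fun h => ne_ab j i h.symm
  have hqs : b i ≠ b (i + j) := fun h => hij_ne (inj_b h)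
  have hrs : a j ≠ b (i + j) := ne_ab j (i + j)
  -- the two key iffs from the configuration
  have hx1 : G.Adj (a 0) (b i) ↔ ¬ G.Adj (a 0) (b (i + j)) := by
    rcases hcfg with ⟨h1, h2, h3⟩ | ⟨h1, h2, h3⟩
    · exact ⟨fun _ => h2, fun _ => h1⟩
    · exact ⟨fun hh => absurd hh h1, fun hh => absurd h2 hh⟩
  have hx2 : G.Adj (a 0) (b (i - j)) ↔ G.Adj (a 0) (b (i + j)) := by
    rcases hcfg with ⟨h1, h2, h3⟩ | ⟨h1, h2, h3⟩
    · exact ⟨fun hh => absurd hh h3, fun hh => absurd hh h2⟩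
    · exact ⟨fun _ => h2, fun _ => h3⟩
  constructor
  · -- InducesP4
    by_cases hH : G.Adj (a 0) (a j)
    · rcases hcfg with ⟨hF, hFp, hFm⟩ | ⟨hF, hFp, hFm⟩
      · -- path  b i - a 0 - a j - b (i+j)
        refine ⟨b i, a 0, a j, b (i + j), ?_, hpq.symm, hqr, hqs, hpr, hps, hrs,
          ?_, ?_, ?_, ?_, ?_, ?_⟩
        · ext u; simp only [Set.mem_insert_iff, Set.mem_singleton_iff]; tauto
        · rwa [G.adj_comm]
        · exact hH
        · exact Ars.mpr hF
        · exact fun h => hFm (Aqr.mp h)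
        · exact fun h => (Aqs.mp h) hH
        · exact hFp
      · -- path  b i - a j - a 0 - b (i+j)
        refine ⟨b i, a j, a 0, b (i + j), ?_, hqr, hpq.symm, hqs, hpr.symm, hrs, hps,
          ?_, ?_, ?_, ?_, ?_, ?_⟩
        · ext u; simp only [Set.mem_insert_iff, Set.mem_singleton_iff]; tauto
        · exact Aqr.mpr hFm
        · rwa [G.adj_comm]
        · exact hFp
        · exact fun h => hF (by rwa [G.adj_comm] at h)
        · exact fun h => (Aqs.mp h) hH
        · exact fun h => hF (Ars.mp h)
    · rcases hcfg with ⟨hF, hFp, hFm⟩ | ⟨hF, hFp, hFm⟩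
      · -- path  a 0 - b i - b (i+j) - a j
        refine ⟨a 0, b i, b (i + j), a j, ?_, hpq, hps, hpr, hqs, hqr, hrs.symm,
          ?_, ?_, ?_, ?_, ?_, ?_⟩
        · ext u; simp only [Set.mem_insert_iff, Set.mem_singleton_iff]; tauto
        · exact hF
        · exact Aqs.mpr hH
        · rw [G.adj_comm]; exact Ars.mpr hF
        · exact hFp
        · exact hH
        · exact fun h => hFm (Aqr.mp h)
      · -- path  a 0 - b (i+j) - b i - a j
        refine ⟨a 0, b (i + j), b i, a j, ?_, hps, hpq, hpr, hqs.symm, hrs.symm, hqr,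
          ?_, ?_, ?_, ?_, ?_, ?_⟩
        · ext u; simp only [Set.mem_insert_iff, Set.mem_singleton_iff]; tauto
        · exact hFp
        · rw [G.adj_comm]; exact Aqs.mpr hH
        · exact Aqr.mpr hFm
        · exact hF
        · exact hH
        · rw [G.adj_comm]; exact fun h => hF (Ars.mp h)
  · -- the cyc4 antimorphism property
    apply cyc4_anti G (a 0) (b i) (a j) (b (i + j)) hpq hpr hps hqr hqs hrs
    · rw [Aqr, hx2]; exact hx1
    · rw [Aqs, not_not]
    · rw [G.adj_comm (b i) (a 0), hx1, not_not]
    · rw [Aqr, Ars, hx2, hx1, not_not]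
    · rw [Aqs, G.adj_comm (a j) (a 0)]
    · rw [Ars, G.adj_comm (b (i + j)) (a 0)]; exact hx1
end

section
/- Every self-complementary graph on 4k vertices contains k pairwise vertex-disjoint induced paths on 4 vertices; equivalently, its vertex set can be partitioned into k sets of 4 vertices each inducing a P_4. -/
open Function

section GibbsAux
variable {V : Type*}

/-- `σ` is a complementing permutation (antimorphism) of `G`. -/
def AntiPerm (G : SimpleGraph V) (σ : Equiv.Perm V) : Prop :=
  ∀ u v : V, u ≠ v → (G.Adj (σ u) (σ v) ↔ ¬ G.Adj u v)

namespace AntiPerm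

variable {G : SimpleGraph V} {σ : Equiv.Perm V} (h : AntiPerm G σ)
include h

lemma inv (u v : V) (huv : u ≠ v) : G.Adj (σ⁻¹ u) (σ⁻¹ v) ↔ ¬ G.Adj u v := by
  have h2 := h (σ⁻¹ u) (σ⁻¹ v) (fun e => huv (by simpa using congrArg σ e))
  simp only [show ∀ a, σ (σ⁻¹ a) = a from fun a => σ.apply_symm_apply a] at h2
  tauto

lemma sq (u v : V) (huv : u ≠ v) : G.Adj (σ (σ u)) (σ (σ v)) ↔ G.Adj u v := by
  rw [h _ _ (fun e => huv (σ.injective e)), not_iff_comm, Iff.comm, ← h u v huv]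

lemma invsq (u v : V) (huv : u ≠ v) : G.Adj (σ⁻¹ (σ⁻¹ u)) (σ⁻¹ (σ⁻¹ v)) ↔ G.Adj u v := by
  rw [h.inv _ _ (fun e => huv (σ⁻¹.injective e)), not_iff_comm, Iff.comm, ← h.inv u v huv]

/-- even integer powers of σ preserve adjacency between distinct vertices -/
lemma zpow_even : ∀ (j : ℤ), Even j → ∀ (u v : V), u ≠ v →
    (G.Adj ((σ ^ j) u) ((σ ^ j) v) ↔ G.Adj u v) := by
  have key : ∀ (j : ℤ), ∀ (u v : V), u ≠ v →
      (G.Adj ((σ ^ (2 * j)) u) ((σ ^ (2 * j)) v) ↔ G.Adj u v) := by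
    intro j
    induction j using Int.induction_on with
    | zero => simp
    | succ i ih =>
      intro u v huv
      have e : (2 : ℤ) * (i + 1) = 2 * i + 1 + 1 := by ring
      rw [e, zpow_add_one, zpow_add_one, Equiv.Perm.mul_apply, Equiv.Perm.mul_apply,
        Equiv.Perm.mul_apply, Equiv.Perm.mul_apply]
      rw [ih (σ (σ u)) (σ (σ v)) (fun e => huv (σ.injective (σ.injective e))),
        h.sq u v huv]
    | pred i ih =>
      intro u v huv
      have e : (2 : ℤ) * (-↑i - 1) = 2 * (-↑i : ℤ) - 1 - 1 := by ring
      rw [e, zpow_sub_one, zpow_sub_one, Equiv.Perm.mul_apply, Equiv.Perm.mul_apply,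
        Equiv.Perm.mul_apply, Equiv.Perm.mul_apply]
      rw [ih (σ⁻¹ (σ⁻¹ u)) (σ⁻¹ (σ⁻¹ v)) (fun e => huv (σ⁻¹.injective (σ⁻¹.injective e))),
        h.invsq u v huv]
  rintro j ⟨i, rfl⟩ u v huv
  have e : i + i = 2 * i := by ring
  rw [e]
  exact key i u v huv

lemma zpow_odd : ∀ (j : ℤ), Odd j → ∀ (u v : V), u ≠ v →
    (G.Adj ((σ ^ j) u) ((σ ^ j) v) ↔ ¬ G.Adj u v) := by
  rintro j ⟨i, rfl⟩ u v huv
  rw [zpow_add_one, Equiv.Perm.mul_apply, Equiv.Perm.mul_apply]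
  rw [h.zpow_even (2*i) ⟨i, by ring⟩ (σ u) (σ v) (fun e => huv (σ.injective e)),
    h u v huv]

end AntiPerm
end GibbsAux

/-- The key combinatorial lemma on antisymmetric periodic boolean sequences. -/
lemma gibbs_key : ∀ (m : ℕ), 0 < m → ∀ (o : ℤ → Bool),
    (∀ t : ℤ, o (t + 2 * m) = o t) → (∀ t : ℤ, o (-1 - t) = ! o t) →
    ∃ (s : ℤ) (p d : ℕ), 0 < p ∧ m = p * 2 ^ d ∧
      o (s - p) = ! o s ∧ o (s + p) = ! o s := by
  intro m
  induction m using Nat.strong_induction_on with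
  | _ m IH =>
    intro hm o hper hanti
    by_cases hc : ∃ s : ℤ, o (s + m) ≠ o s
    · obtain ⟨s, hs⟩ := hc
      have hsm : o (s + m) = ! o s := Bool.eq_not_iff.mpr hs
      refine ⟨s, m, 0, hm, by ring, ?_, hsm⟩
      have h1 : o (s - m + 2 * m) = o (s - m) := hper (s - m)
      have h2 : s - (m:ℤ) + 2 * m = s + m := by ring
      rw [h2] at h1
      rw [← h1, hsm]
    · push_neg at hc
      rcases Nat.even_or_odd m with hev | hodd
      · obtain ⟨m', rfl⟩ : ∃ m', m = 2 * m' := ⟨m / 2, by rw [Nat.even_iff] at hev; omega⟩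
        have hm' : 0 < m' := by omega
        obtain ⟨s, p, d, hp, hpd, h1, h2⟩ := IH m' (by omega) hm' o
          (by
            intro t
            have h3 := hc t
            rwa [show t + 2 * (m' : ℤ) = t + ((2 * m' : ℕ) : ℤ) by push_cast; ring])
          hanti
        exact ⟨s, p, d + 1, hp, by rw [hpd]; ring, h1, h2⟩
      · exfalso
        obtain ⟨w, rfl⟩ := hodd
        have key := hc (-1 - w)
        have e : (-1 - (w:ℤ)) + ((2 * w + 1 : ℕ) : ℤ) = w := by push_cast; ring
        rw [e, hanti w] at key
        simp at key

set_option maxHeartbeats 1000000 in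
lemma quad_p4 {V : Type*} {G : SimpleGraph V} {σ : Equiv.Perm V} (h : AntiPerm G σ)
    (x : V) (n m : ℕ) (hnm : n = 4 * m)
    (hdvd : ∀ q : ℤ, (σ ^ q) x = x ↔ (n : ℤ) ∣ q)
    (p : ℕ) (hp : 0 < p) (hpm : p ≤ m) (s : ℤ)
    (h1 : G.Adj x ((σ ^ (2 * (s - p) + 1)) x) ↔ ¬ G.Adj x ((σ ^ (2 * s + 1)) x))
    (h2 : G.Adj x ((σ ^ (2 * (s + p) + 1)) x) ↔ ¬ G.Adj x ((σ ^ (2 * s + 1)) x))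
    (i : ℤ) :
    InducesP4 G {(σ ^ i) x, (σ ^ (i + (2 * s + 1))) x,
      (σ ^ (i + 2 * p)) x, (σ ^ (i + 2 * p + (2 * s + 1))) x} := by
  have hm : 0 < m := lt_of_lt_of_le hp hpm
  -- basic nondivisibility facts
  have hne : ∀ (j t : ℤ), ¬ (n : ℤ) ∣ t → (σ ^ (j + t)) x ≠ (σ ^ j) x := by
    intro j t hnd e
    rw [zpow_add, Equiv.Perm.mul_apply] at e
    exact hnd ((hdvd t).mp ((σ ^ j).injective e))
  have h2n : (2 : ℤ) ∣ (n : ℤ) := ⟨2 * m, by rw [hnm]; push_cast; ring⟩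
  have hOdd : ∀ t : ℤ, Odd t → ¬ (n : ℤ) ∣ t := by
    intro t ht hd
    obtain ⟨w, hw⟩ := ht
    obtain ⟨c, hc⟩ := dvd_trans h2n hd
    omega
  have hndr : ¬ (n : ℤ) ∣ (2 * s + 1) := hOdd _ ⟨s, by ring⟩
  have hnd2p : ¬ (n : ℤ) ∣ (2 * (p : ℤ)) := by
    intro hd
    have h1 := Int.le_of_dvd (by positivity) hd
    omega
  have hnd2pr : ¬ (n : ℤ) ∣ (2 * (p : ℤ) + (2 * s + 1)) := hOdd _ ⟨(p : ℤ) + s, by ring⟩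
  have hnd2pmr : ¬ (n : ℤ) ∣ (2 * (p : ℤ) - (2 * s + 1)) := hOdd _ ⟨(p : ℤ) - s - 1, by ring⟩
  -- shifting lemmas
  have SHIFT : ∀ (a b t : ℤ), ¬ (n : ℤ) ∣ t → Even (a - b) →
      (G.Adj ((σ ^ a) x) ((σ ^ (a + t)) x) ↔ G.Adj ((σ ^ b) x) ((σ ^ (b + t)) x)) := by
    intro a b t hnd hab
    have e1 : a - b + b = a := by ring
    have e2 : a - b + (b + t) = a + t := by ring
    have r1 : (σ ^ a) x = (σ ^ (a - b)) ((σ ^ b) x) := by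
      rw [← Equiv.Perm.mul_apply, ← zpow_add, e1]
    have r2 : (σ ^ (a + t)) x = (σ ^ (a - b)) ((σ ^ (b + t)) x) := by
      rw [← Equiv.Perm.mul_apply, ← zpow_add, e2]
    rw [r1, r2, h.zpow_even (a - b) hab _ _ (hne b t hnd).symm]
  have FLIP : ∀ (a b t : ℤ), ¬ (n : ℤ) ∣ t → Odd (a - b) →
      (G.Adj ((σ ^ a) x) ((σ ^ (a + t)) x) ↔ ¬ G.Adj ((σ ^ b) x) ((σ ^ (b + t)) x)) := by
    intro a b t hnd hab
    have e1 : a - b + b = a := by ring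
    have e2 : a - b + (b + t) = a + t := by ring
    have r1 : (σ ^ a) x = (σ ^ (a - b)) ((σ ^ b) x) := by
      rw [← Equiv.Perm.mul_apply, ← zpow_add, e1]
    have r2 : (σ ^ (a + t)) x = (σ ^ (a - b)) ((σ ^ (b + t)) x) := by
      rw [← Equiv.Perm.mul_apply, ← zpow_add, e2]
    rw [r1, r2, h.zpow_odd (a - b) hab _ _ (hne b t hnd).symm]
  have BASE : ∀ t : ℤ, G.Adj ((σ ^ (0 : ℤ)) x) ((σ ^ ((0 : ℤ) + t)) x) ↔ G.Adj x ((σ ^ t) x) := by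
    intro t
    rw [zpow_zero, zero_add]
    rfl
  -- transport of base relations to offset `a`
  have TR1 : ∀ (a t t' : ℤ), ¬ (n : ℤ) ∣ t → ¬ (n : ℤ) ∣ t' →
      (G.Adj x ((σ ^ t) x) ↔ G.Adj x ((σ ^ t') x)) →
      (G.Adj ((σ ^ a) x) ((σ ^ (a + t)) x) ↔ G.Adj ((σ ^ a) x) ((σ ^ (a + t')) x)) := by
    intro a t t' hT hT' hbase
    rcases Int.even_or_odd a with ha | ha
    · rw [SHIFT a 0 t hT (by simpa using ha), SHIFT a 0 t' hT' (by simpa using ha), BASE, BASE]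
      exact hbase
    · rw [FLIP a 0 t hT (by simpa using ha), FLIP a 0 t' hT' (by simpa using ha), BASE, BASE]
      exact not_congr hbase
  have TR2 : ∀ (a t t' : ℤ), ¬ (n : ℤ) ∣ t → ¬ (n : ℤ) ∣ t' →
      (G.Adj x ((σ ^ t) x) ↔ ¬ G.Adj x ((σ ^ t') x)) →
      (G.Adj ((σ ^ a) x) ((σ ^ (a + t)) x) ↔ ¬ G.Adj ((σ ^ a) x) ((σ ^ (a + t')) x)) := by
    intro a t t' hT hT' hbase
    rcases Int.even_or_odd a with ha | ha
    · rw [SHIFT a 0 t hT (by simpa using ha), SHIFT a 0 t' hT' (by simpa using ha), BASE, BASE]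
      exact hbase
    · rw [FLIP a 0 t hT (by simpa using ha), FLIP a 0 t' hT' (by simpa using ha), BASE, BASE]
      tauto
  -- base adjacency relations
  have NEGQ : ∀ q : ℤ, Odd q → (G.Adj x ((σ ^ (-q : ℤ)) x) ↔ ¬ G.Adj x ((σ ^ q) x)) := by
    intro q hq
    have hxne : x ≠ (σ ^ (-q : ℤ)) x := by
      have := hne 0 (-q) (by rw [Int.dvd_neg]; exact hOdd q hq)
      simpa using this.symm
    have key := h.zpow_odd q hq x ((σ ^ (-q : ℤ)) x) hxne
    have e1 : (σ ^ q) ((σ ^ (-q : ℤ)) x) = x := by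
      rw [← Equiv.Perm.mul_apply, ← zpow_add]
      simp
    rw [e1, G.adj_comm] at key
    exact iff_not_comm.mp key
  have base2 : G.Adj x ((σ ^ (2 * (p : ℤ) + (2 * s + 1))) x) ↔ ¬ G.Adj x ((σ ^ (2 * s + 1)) x) := by
    rw [show (2 * (p : ℤ) + (2 * s + 1)) = 2 * (s + (p : ℤ)) + 1 by ring]
    exact h2
  have base3 : G.Adj x ((σ ^ (2 * (p : ℤ) - (2 * s + 1))) x) ↔ G.Adj x ((σ ^ (2 * s + 1)) x) := by
    rw [show (2 * (p : ℤ) - (2 * s + 1)) = -(2 * (s - (p : ℤ)) + 1) by ring]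
    rw [NEGQ _ ⟨s - p, by ring⟩, h1]
    tauto
  -- adjacency relations between the four vertices
  have L1 : G.Adj ((σ ^ (i + 2 * (p : ℤ))) x) ((σ ^ (i + 2 * (p : ℤ) + (2 * s + 1))) x) ↔
      G.Adj ((σ ^ i) x) ((σ ^ (i + (2 * s + 1))) x) := by
    rw [show i + 2 * (p : ℤ) + (2 * s + 1) = (i + 2 * (p : ℤ)) + (2 * s + 1) by ring]
    exact SHIFT (i + 2 * p) i (2 * s + 1) hndr ⟨(p : ℤ), by ring⟩
  have L2 : G.Adj ((σ ^ i) x) ((σ ^ (i + 2 * (p : ℤ) + (2 * s + 1))) x) ↔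
      ¬ G.Adj ((σ ^ i) x) ((σ ^ (i + (2 * s + 1))) x) := by
    rw [show i + 2 * (p : ℤ) + (2 * s + 1) = i + (2 * (p : ℤ) + (2 * s + 1)) by ring]
    exact TR2 i _ _ hnd2pr hndr base2
  have L3 : G.Adj ((σ ^ (i + (2 * s + 1))) x) ((σ ^ (i + 2 * (p : ℤ))) x) ↔
      ¬ G.Adj ((σ ^ i) x) ((σ ^ (i + (2 * s + 1))) x) := by
    rw [show i + 2 * (p : ℤ) = (i + (2 * s + 1)) + (2 * (p : ℤ) - (2 * s + 1)) by ring]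
    rw [FLIP (i + (2 * s + 1)) i (2 * (p : ℤ) - (2 * s + 1)) hnd2pmr ⟨s, by ring⟩]
    exact not_congr (TR1 i _ _ hnd2pmr hndr base3)
  have L4 : G.Adj ((σ ^ (i + (2 * s + 1))) x) ((σ ^ (i + 2 * (p : ℤ) + (2 * s + 1))) x) ↔
      ¬ G.Adj ((σ ^ i) x) ((σ ^ (i + 2 * (p : ℤ))) x) := by
    rw [show i + 2 * (p : ℤ) + (2 * s + 1) = (i + (2 * s + 1)) + 2 * (p : ℤ) by ring]
    exact FLIP (i + (2 * s + 1)) i (2 * (p : ℤ)) hnd2p ⟨s, by ring⟩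
  -- distinctness
  have nab : (σ ^ i) x ≠ (σ ^ (i + (2 * s + 1))) x := (hne i (2 * s + 1) hndr).symm
  have nac : (σ ^ i) x ≠ (σ ^ (i + 2 * (p : ℤ))) x := (hne i (2 * (p : ℤ)) hnd2p).symm
  have nad : (σ ^ i) x ≠ (σ ^ (i + 2 * (p : ℤ) + (2 * s + 1))) x := by
    rw [show i + 2 * (p : ℤ) + (2 * s + 1) = i + (2 * (p : ℤ) + (2 * s + 1)) by ring]
    exact (hne i _ hnd2pr).symm
  have nbc : (σ ^ (i + (2 * s + 1))) x ≠ (σ ^ (i + 2 * (p : ℤ))) x := by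
    rw [show i + 2 * (p : ℤ) = (i + (2 * s + 1)) + (2 * (p : ℤ) - (2 * s + 1)) by ring]
    exact (hne (i + (2 * s + 1)) _ hnd2pmr).symm
  have nbd : (σ ^ (i + (2 * s + 1))) x ≠ (σ ^ (i + 2 * (p : ℤ) + (2 * s + 1))) x := by
    rw [show i + 2 * (p : ℤ) + (2 * s + 1) = (i + (2 * s + 1)) + 2 * (p : ℤ) by ring]
    exact (hne (i + (2 * s + 1)) _ hnd2p).symm
  have ncd : (σ ^ (i + 2 * (p : ℤ))) x ≠ (σ ^ (i + 2 * (p : ℤ) + (2 * s + 1))) x :=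
    (hne (i + 2 * (p : ℤ)) _ hndr).symm
  -- make the four vertices opaque
  obtain ⟨a, ha⟩ : ∃ a', (σ ^ i) x = a' := ⟨_, rfl⟩
  obtain ⟨b, hb⟩ : ∃ b', (σ ^ (i + (2 * s + 1))) x = b' := ⟨_, rfl⟩
  obtain ⟨c, hc⟩ : ∃ c', (σ ^ (i + 2 * (p : ℤ))) x = c' := ⟨_, rfl⟩
  obtain ⟨d, hd⟩ : ∃ d', (σ ^ (i + 2 * (p : ℤ) + (2 * s + 1))) x = d' := ⟨_, rfl⟩
  simp only [ha, hb, hc, hd] at L1 L2 L3 L4 nab nac nad nbc nbd ncd ⊢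
  clear ha hb hc hd SHIFT FLIP TR1 TR2 BASE base2 base3 hne hdvd h1 h2 hndr hnd2p hnd2pr hnd2pmr hOdd h2n h
  by_cases hab : G.Adj a b <;> by_cases hac : G.Adj a c
  · -- path b - a - c - d
    refine ⟨b, a, c, d, ?_, nab.symm, nbc, nbd, nac, nad, ncd, hab.symm, hac, L1.mpr hab,
      fun hx => (L3.mp hx) hab, fun hx => (L4.mp hx) hac, fun hx => (L2.mp hx) hab⟩
    ext v
    simp only [Set.mem_insert_iff, Set.mem_singleton_iff]
    tauto
  · -- path a - b - d - c
    refine ⟨a, b, d, c, ?_, nab, nad, nac, nbd, nbc, ncd.symm, hab, L4.mpr hac,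
      (L1.mpr hab).symm, fun hx => (L2.mp hx) hab, hac, fun hx => (L3.mp hx) hab⟩
    ext v
    simp only [Set.mem_insert_iff, Set.mem_singleton_iff]
    tauto
  · -- path d - a - c - b
    refine ⟨d, a, c, b, ?_, nad.symm, ncd.symm, nbd.symm, nac, nab, nbc.symm,
      (L2.mpr hab).symm, hac, (L3.mpr hab).symm,
      fun hx => hab (L1.mp hx.symm), fun hx => (L4.mp hx.symm) hac, hab⟩
    ext v
    simp only [Set.mem_insert_iff, Set.mem_singleton_iff]
    tauto
  · -- path a - d - b - c
    refine ⟨a, d, b, c, ?_, nad, nab, nac, nbd.symm, ncd.symm, nbc,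
      L2.mpr hab, (L4.mpr hac).symm, L3.mpr hab, hab, hac,
      fun hx => hab (L1.mp hx.symm)⟩
    ext v
    simp only [Set.mem_insert_iff, Set.mem_singleton_iff]
    tauto


lemma orbit_partition {V : Type*} [Fintype V] {G : SimpleGraph V} {σ : Equiv.Perm V}
    (h : AntiPerm G σ) (x : V) (hx : σ x ≠ x) :
    ∃ (m : ℕ) (O : Finset V) (Po : Finset (Finset V)),
      0 < m ∧ O.card = 4 * m ∧ x ∈ O ∧
      (∀ v ∈ O, σ v ∈ O) ∧
      (∀ S : Finset V, x ∈ S → (∀ w ∈ S, σ w ∈ S) → O ⊆ S) ∧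
      Po.card = m ∧
      (∀ q ∈ Po, q ⊆ O ∧ q.Nonempty ∧ InducesP4 G ↑q) ∧
      (∀ v ∈ O, ∃! q, q ∈ Po ∧ v ∈ q) := by
  classical
  set n := MulAction.period σ x with hn
  have npos : 0 < n := MulAction.period_pos_of_orderOf_pos (orderOf_pos σ) x
  have hdvdZ : ∀ q : ℤ, (σ ^ q) x = x ↔ (n : ℤ) ∣ q := by
    intro q
    rw [hn, ← MulAction.zpow_smul_eq_iff_period_dvd]
    rfl
  have hnx : (σ ^ (n : ℤ)) x = x := (hdvdZ n).mpr dvd_rfl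
  have EQ : ∀ a b : ℤ, (n : ℤ) ∣ (a - b) → (σ ^ a) x = (σ ^ b) x := by
    intro a b hd
    rw [show a = b + (a - b) by ring, zpow_add, Equiv.Perm.mul_apply, (hdvdZ _).mpr hd]
  have EQIff : ∀ a b : ℤ, ((σ ^ a) x = (σ ^ b) x) ↔ (n : ℤ) ∣ (a - b) := by
    intro a b
    refine ⟨fun e => ?_, EQ a b⟩
    rw [show a = b + (a - b) by ring, zpow_add, Equiv.Perm.mul_apply] at e
    exact (hdvdZ _).mp ((σ ^ b).injective e)
  have hcomm : ∀ j : ℤ, (σ ^ j) (σ x) = σ ((σ ^ j) x) := by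
    intro j
    have e1 : (σ ^ (j + 1)) x = (σ ^ j) (σ x) := by
      rw [zpow_add_one, Equiv.Perm.mul_apply]
    have e2 : (σ ^ (j + 1)) x = σ ((σ ^ j) x) := by
      rw [show j + 1 = 1 + j by ring, zpow_one_add, Equiv.Perm.mul_apply]
    rw [← e1, e2]
  -- n is even
  have hEvenN : Even n := by
    by_contra hodd
    rw [Nat.not_even_iff_odd] at hodd
    have key := h.zpow_odd (n : ℤ) (by exact_mod_cast hodd) x (σ x) (Ne.symm hx)
    rw [hnx, hcomm, hnx] at key
    exact iff_not_self key
  -- 4 ∣ n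
  have h4 : 4 ∣ n := by
    obtain ⟨hh, hnn⟩ : ∃ hh, n = 2 * hh := by
      obtain ⟨r, hr⟩ := hEvenN
      exact ⟨r, by omega⟩
    rcases Nat.even_or_odd hh with hhe | hho
    · obtain ⟨r, hr⟩ := hhe
      exact ⟨r, by omega⟩
    · exfalso
      have hhpos : 0 < hh := by omega
      have hv : x ≠ (σ ^ (hh : ℤ)) x := by
        intro e
        have hd := (hdvdZ hh).mp e.symm
        have := Int.le_of_dvd (by exact_mod_cast hhpos) hd
        omega
      have key := h.zpow_odd (hh : ℤ) (by exact_mod_cast hho) x _ hv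
      have e2 : (σ ^ (hh : ℤ)) ((σ ^ (hh : ℤ)) x) = x := by
        rw [← Equiv.Perm.mul_apply, ← zpow_add, show (hh : ℤ) + hh = (n : ℤ) by push_cast [hnn]; ring]
        exact hnx
      rw [e2, G.adj_comm] at key
      exact iff_not_self key
  obtain ⟨m, hnm⟩ := h4
  have hm : 0 < m := by omega
  -- small helpers
  have hOddnd : ∀ t : ℤ, Odd t → ¬ (n : ℤ) ∣ t := by
    intro t ht hd
    obtain ⟨c1, hc1⟩ := ht
    obtain ⟨c2, hc2⟩ := dvd_trans (⟨2 * m, by rw [hnm]; push_cast; ring⟩ : (2:ℤ) ∣ (n:ℤ)) hd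
    omega
  have NEGQ : ∀ q : ℤ, Odd q → (G.Adj x ((σ ^ (-q : ℤ)) x) ↔ ¬ G.Adj x ((σ ^ q) x)) := by
    intro q hq
    have hxne : x ≠ (σ ^ (-q : ℤ)) x := by
      intro e
      have hd := (hdvdZ (-q)).mp e.symm
      rw [Int.dvd_neg] at hd
      exact hOddnd q hq hd
    have key := h.zpow_odd q hq x ((σ ^ (-q : ℤ)) x) hxne
    have e1 : (σ ^ q) ((σ ^ (-q : ℤ)) x) = x := by
      rw [← Equiv.Perm.mul_apply, ← zpow_add]
      simp
    rw [e1, G.adj_comm] at key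
    exact iff_not_comm.mp key
  -- the boolean sequence
  set o : ℤ → Bool := fun t => decide (G.Adj x ((σ ^ (2 * t + 1)) x)) with ho
  have hper : ∀ t : ℤ, o (t + 2 * (m : ℤ)) = o t := by
    intro t
    simp only [ho]
    rw [EQ (2 * (t + 2 * (m : ℤ)) + 1) (2 * t + 1)
      ⟨1, by rw [hnm]; push_cast; ring⟩]
  have hanti : ∀ t : ℤ, o (-1 - t) = ! o t := by
    intro t
    simp only [ho]
    rw [show 2 * (-1 - t) + 1 = -(2 * t + 1) by ring]
    rw [decide_eq_decide.mpr (NEGQ (2 * t + 1) ⟨t, by ring⟩), decide_not]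
  obtain ⟨s, p, d, hp, hpd, h1b, h2b⟩ := gibbs_key m hm o hper hanti
  have hpm : p ≤ m := by
    rw [hpd]
    calc p = p * 1 := by ring
    _ ≤ p * 2 ^ d := Nat.mul_le_mul_left p (Nat.one_le_two_pow)
  simp only [ho] at h1b h2b
  have h1p : G.Adj x ((σ ^ (2 * (s - (p : ℤ)) + 1)) x) ↔ ¬ G.Adj x ((σ ^ (2 * s + 1)) x) := by
    have h' : decide (G.Adj x ((σ ^ (2 * (s - (p : ℤ)) + 1)) x))
        = decide (¬ G.Adj x ((σ ^ (2 * s + 1)) x)) := by rw [decide_not]; exact h1b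
    exact decide_eq_decide.mp h'
  have h2p : G.Adj x ((σ ^ (2 * (s + (p : ℤ)) + 1)) x) ↔ ¬ G.Adj x ((σ ^ (2 * s + 1)) x) := by
    have h' : decide (G.Adj x ((σ ^ (2 * (s + (p : ℤ)) + 1)) x))
        = decide (¬ G.Adj x ((σ ^ (2 * s + 1)) x)) := by rw [decide_not]; exact h2b
    exact decide_eq_decide.mp h'
  -- the orbit
  set O : Finset V := (Finset.range n).image (fun q : ℕ => (σ ^ (q : ℤ)) x) with hO
  have hOmem : ∀ a : ℤ, (σ ^ a) x ∈ O := by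
    intro a
    rw [hO, Finset.mem_image]
    have h0 : 0 ≤ a % (n : ℤ) := Int.emod_nonneg a (by exact_mod_cast npos.ne')
    have h1 : a % (n : ℤ) < n := Int.emod_lt_of_pos a (by exact_mod_cast npos)
    refine ⟨(a % (n : ℤ)).toNat, Finset.mem_range.mpr (by omega), ?_⟩
    apply EQ
    rw [Int.toNat_of_nonneg h0]
    exact ⟨-(a / n), by rw [Int.emod_def]; ring⟩
  have hxO : x ∈ O := by
    have := hOmem 0
    simpa using this
  have hOcl : ∀ v ∈ O, σ v ∈ O := by
    intro v hv
    rw [hO, Finset.mem_image] at hv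
    obtain ⟨q, _, rfl⟩ := hv
    have e : σ ((σ ^ (q : ℤ)) x) = (σ ^ (1 + (q : ℤ))) x := by
      rw [zpow_one_add, Equiv.Perm.mul_apply]
    rw [e]
    exact hOmem _
  have hOmin : ∀ S : Finset V, x ∈ S → (∀ w ∈ S, σ w ∈ S) → O ⊆ S := by
    intro S hxS hcl v hv
    rw [hO, Finset.mem_image] at hv
    obtain ⟨q, hq, rfl⟩ := hv
    clear hq
    induction q with
    | zero => simpa using hxS
    | succ q ih =>
      have e : (σ ^ ((q + 1 : ℕ) : ℤ)) x = σ ((σ ^ (q : ℤ)) x) := by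
        rw [show ((q + 1 : ℕ) : ℤ) = 1 + (q : ℤ) by push_cast; ring, zpow_one_add,
          Equiv.Perm.mul_apply]
      rw [e]
      exact hcl _ ih
  have hOcard : O.card = n := by
    rw [hO, Finset.card_image_of_injOn, Finset.card_range]
    intro q1 hq1 q2 hq2 he
    simp only [Finset.coe_range, Set.mem_Iio] at hq1 hq2
    have hd := (EQIff _ _).mp he
    have := Int.eq_zero_of_abs_lt_dvd hd (by rw [abs_lt]; constructor <;> omega)
    omega
  -- the vertex labeling maps
  set uu : ℕ → V := fun y => (σ ^ (2 * (y : ℤ))) x with hu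
  set ww : ℕ → V := fun y => (σ ^ (2 * (y : ℤ) + (2 * s + 1))) x with hw
  have huinj : ∀ y1 y2 : ℕ, y1 < 2 * m → y2 < 2 * m → uu y1 = uu y2 → y1 = y2 := by
    intro y1 y2 hy1 hy2 e
    simp only [hu] at e
    have hd := (EQIff _ _).mp e
    have := Int.eq_zero_of_abs_lt_dvd hd (by rw [abs_lt]; constructor <;> omega)
    omega
  have hwinj : ∀ y1 y2 : ℕ, y1 < 2 * m → y2 < 2 * m → ww y1 = ww y2 → y1 = y2 := by
    intro y1 y2 hy1 hy2 e
    simp only [hw] at e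
    have hd := (EQIff _ _).mp e
    have hd2 : (n : ℤ) ∣ 2 * (y1 : ℤ) - 2 * y2 := by
      rw [show 2 * (y1 : ℤ) - 2 * y2
        = (2 * (y1 : ℤ) + (2 * s + 1)) - (2 * (y2 : ℤ) + (2 * s + 1)) by ring]
      exact hd
    have := Int.eq_zero_of_abs_lt_dvd hd2 (by rw [abs_lt]; constructor <;> omega)
    omega
  have huw : ∀ y1 y2 : ℕ, uu y1 ≠ ww y2 := by
    intro y1 y2 e
    simp only [hu, hw] at e
    have hd := (EQIff _ _).mp e
    exact hOddnd _ ⟨(y1 : ℤ) - y2 - s - 1, by ring⟩ hd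
  -- index arithmetic
  set M : ℕ := 2 ^ d with hM
  have hMpos : 0 < M := Nat.pow_pos (by norm_num)
  have hm2 : m = p * M := hpd
  set T : Finset ℕ := (Finset.range (2 * m)).filter (fun y => (y / p) % 2 = 0) with hT
  have hTmem : ∀ y : ℕ, y ∈ T ↔ (y < 2 * m ∧ (y / p) % 2 = 0) := by
    intro y
    rw [hT, Finset.mem_filter, Finset.mem_range]
  have hdivlt : ∀ y : ℕ, y < 2 * m → y / p < 2 * M := by
    intro y hy
    rw [Nat.div_lt_iff_lt_mul hp]
    have e2 : 2 * M * p = 2 * m := by rw [hm2]; ring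
    omega
  have hTbound : ∀ y ∈ T, y + p < 2 * m := by
    intro y hy
    rw [hTmem] at hy
    obtain ⟨hy1, hy2⟩ := hy
    by_contra hcon
    have e2 : 2 * M * p = 2 * m := by rw [hm2]; ring
    have e3 : (2 * M - 1) * p = 2 * m - p := by rw [Nat.sub_mul]; omega
    have hge : (2 * M - 1) * p ≤ y := by omega
    have h1 : 2 * M - 1 ≤ y / p := (Nat.le_div_iff_mul_le hp).mpr hge
    have h2 := hdivlt y hy1
    omega
  have hTdecomp : ∀ y : ℕ, y < 2 * m → ∃ y0, y0 ∈ T ∧ (y = y0 ∨ y = y0 + p) := by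
    intro y hy
    by_cases hc : (y / p) % 2 = 0
    · exact ⟨y, (hTmem y).mpr ⟨hy, hc⟩, Or.inl rfl⟩
    · have hpy : p ≤ y := by
        by_contra hcon
        rw [Nat.div_eq_of_lt (by omega)] at hc
        omega
      have hsub : y - p + p = y := by omega
      have hdiv : (y - p) / p + 1 = y / p := by
        rw [← Nat.add_div_right (y - p) hp, hsub]
      refine ⟨y - p, (hTmem _).mpr ⟨by omega, by omega⟩, Or.inr (by omega)⟩
  have hTuniq : ∀ y0 ∈ T, ∀ y1 ∈ T, ∀ y : ℕ, (y = y0 ∨ y = y0 + p) →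
      (y = y1 ∨ y = y1 + p) → y0 = y1 := by
    intro y0 hy0 y1 hy1 y hc0 hc1
    rw [hTmem] at hy0 hy1
    rcases hc0 with rfl | rfl
    · rcases hc1 with h1 | h1
      · exact h1
      · exfalso
        have hd1 : (y1 + p) / p = y1 / p + 1 := Nat.add_div_right y1 hp
        rw [h1, hd1] at hy0
        omega
    · rcases hc1 with h1 | h1
      · exfalso
        have hd0 : (y0 + p) / p = y0 / p + 1 := Nat.add_div_right y0 hp
        rw [← h1, hd0] at hy1
        omega
      · omega
  -- the quadruples
  set Q : ℕ → Finset V := fun y => {uu y, ww y, uu (y + p), ww (y + p)} with hQ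
  set Po : Finset (Finset V) := T.image Q with hPo
  have hQsubO : ∀ y : ℕ, Q y ⊆ O := by
    intro y
    simp only [hQ, hu, hw, Finset.insert_subset_iff, Finset.singleton_subset_iff]
    exact ⟨hOmem _, hOmem _, hOmem _, hOmem _⟩
  have hQP4 : ∀ y : ℕ, InducesP4 G ↑(Q y) := by
    intro y
    have key := quad_p4 h x n m hnm hdvdZ p hp hpm s h1p h2p (2 * (y : ℤ))
    have e1 : uu (y + p) = (σ ^ (2 * (y : ℤ) + 2 * (p : ℤ))) x := by
      simp only [hu]
      rw [show (2 * ((y + p : ℕ) : ℤ)) = 2 * (y : ℤ) + 2 * (p : ℤ) by push_cast; ring]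
    have e2 : ww (y + p) = (σ ^ (2 * (y : ℤ) + 2 * (p : ℤ) + (2 * s + 1))) x := by
      simp only [hw]
      rw [show (2 * ((y + p : ℕ) : ℤ) + (2 * s + 1)) = 2 * (y : ℤ) + 2 * (p : ℤ) + (2 * s + 1)
        by push_cast; ring]
    rw [hQ]
    simp only [Finset.coe_insert, Finset.coe_singleton, hu, hw, e1, e2]
    simp only [hu, hw] at e1 e2
    rw [e1, e2]
    exact key
  have hdecode : ∀ v ∈ O, ∃ y, y < 2 * m ∧ (v = uu y ∨ v = ww y) := by
    intro v hv
    rw [hO, Finset.mem_image] at hv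
    obtain ⟨z, hz, rfl⟩ := hv
    rw [Finset.mem_range] at hz
    rcases Nat.even_or_odd z with he | hodd
    · obtain ⟨c, hc⟩ := he
      refine ⟨z / 2, by omega, Or.inl ?_⟩
      simp only [hu]
      apply EQ
      refine ⟨0, by push_cast; omega⟩
    · set z' : ℤ := ((z : ℤ) - (2 * s + 1)) % (n : ℤ) with hz'
      have h0 : 0 ≤ z' := Int.emod_nonneg _ (by exact_mod_cast npos.ne')
      have h1 : z' < n := Int.emod_lt_of_pos _ (by exact_mod_cast npos)
      have hzdef : z' = ((z : ℤ) - (2 * s + 1)) - (n : ℤ) * (((z : ℤ) - (2 * s + 1)) / (n : ℤ)) := by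
        rw [hz', Int.emod_def]
      have hzeven : Even z' := by
        rw [hzdef]
        have he1 : Even ((n : ℤ) * (((z : ℤ) - (2 * s + 1)) / (n : ℤ))) :=
          (Even.mul_right (by exact_mod_cast hEvenN) _)
        have he2 : Even ((z : ℤ) - (2 * s + 1)) :=
          Odd.sub_odd (by exact_mod_cast hodd) ⟨s, by ring⟩
        exact Even.sub he2 he1
      obtain ⟨c, hc⟩ := hzeven
      have hc' : z' = 2 * c := by omega
      refine ⟨z'.toNat / 2, by omega, Or.inr ?_⟩
      simp only [hw]
      apply EQ
      have htn : ((z'.toNat : ℤ)) = z' := Int.toNat_of_nonneg h0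
      have h2y : 2 * ((z'.toNat / 2 : ℕ) : ℤ) = z' := by omega
      rw [h2y]
      have hdd : (n : ℤ) ∣ ((z : ℤ) - (2 * s + 1)) - z' := Int.dvd_self_sub_of_emod_eq rfl
      rw [show (z : ℤ) - (z' + (2 * s + 1)) = ((z : ℤ) - (2 * s + 1)) - z' by ring]
      exact hdd
  have hmemQ : ∀ y0 ∈ T, ∀ y : ℕ, y < 2 * m → ∀ v : V, (v = uu y ∨ v = ww y) →
      v ∈ Q y0 → (y = y0 ∨ y = y0 + p) := by
    intro y0 hy0 y hy v hvy hvQ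
    have hb0 : y0 < 2 * m := ((hTmem y0).mp hy0).1
    have hb1 : y0 + p < 2 * m := hTbound y0 hy0
    simp only [hQ, Finset.mem_insert, Finset.mem_singleton] at hvQ
    rcases hvy with rfl | rfl
    · rcases hvQ with e | e | e | e
      · exact Or.inl (huinj y y0 hy hb0 e)
      · exact absurd e (huw y y0)
      · exact Or.inr (huinj y (y0 + p) hy hb1 e)
      · exact absurd e (huw y (y0 + p))
    · rcases hvQ with e | e | e | e
      · exact absurd e.symm (huw y0 y)
      · exact Or.inl (hwinj y y0 hy hb0 e)
      · exact absurd e.symm (huw (y0 + p) y)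
      · exact Or.inr (hwinj y (y0 + p) hy hb1 e)
  have hvmem : ∀ y0 : ℕ, ∀ y : ℕ, ∀ v : V, (v = uu y ∨ v = ww y) →
      (y = y0 ∨ y = y0 + p) → v ∈ Q y0 := by
    intro y0 y v hvy hyc
    simp only [hQ, Finset.mem_insert, Finset.mem_singleton]
    rcases hvy with rfl | rfl <;> rcases hyc with rfl | rfl <;> tauto
  have hPoU : ∀ v ∈ O, ∃! q, q ∈ Po ∧ v ∈ q := by
    intro v hv
    obtain ⟨y, hy, hvy⟩ := hdecode v hv
    obtain ⟨y0, hy0T, hyor⟩ := hTdecomp y hy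
    refine ⟨Q y0, ⟨Finset.mem_image_of_mem Q hy0T, hvmem y0 y v hvy hyor⟩, ?_⟩
    rintro q' ⟨hq', hvq'⟩
    obtain ⟨y1, hy1T, rfl⟩ := Finset.mem_image.mp hq'
    have h1 := hmemQ y1 hy1T y hy v hvy hvq'
    rw [hTuniq y1 hy1T y0 hy0T y h1 hyor]
  -- cardinality of Po
  have hObiU : O = Po.biUnion id := by
    apply Finset.Subset.antisymm
    · intro v hv
      obtain ⟨q, ⟨hq, hvq⟩, _⟩ := hPoU v hv
      exact Finset.mem_biUnion.mpr ⟨q, hq, hvq⟩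
    · intro v hv
      obtain ⟨q, hq, hvq⟩ := Finset.mem_biUnion.mp hv
      obtain ⟨y1, _, rfl⟩ := Finset.mem_image.mp hq
      exact hQsubO y1 hvq
  have hQcard : ∀ y ∈ T, (Q y).card = 4 := by
    intro y hyT
    have hb0 : y < 2 * m := ((hTmem y).mp hyT).1
    have hb1 : y + p < 2 * m := hTbound y hyT
    have n1 : uu y ≠ ww y := huw y y
    have n2 : uu y ≠ uu (y + p) := fun e => by have := huinj y (y + p) hb0 hb1 e; omega
    have n3 : uu y ≠ ww (y + p) := huw y (y + p)
    have n4 : ww y ≠ uu (y + p) := fun e => (huw (y + p) y) e.symm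
    have n5 : ww y ≠ ww (y + p) := fun e => by have := hwinj y (y + p) hb0 hb1 e; omega
    have n6 : uu (y + p) ≠ ww (y + p) := huw (y + p) (y + p)
    rw [hQ]
    rw [Finset.card_insert_of_notMem (by
        simp only [Finset.mem_insert, Finset.mem_singleton]
        push_neg
        exact ⟨n1, n2, n3⟩),
      Finset.card_insert_of_notMem (by
        simp only [Finset.mem_insert, Finset.mem_singleton]
        push_neg
        exact ⟨n4, n5⟩),
      Finset.card_insert_of_notMem (by
        simp only [Finset.mem_singleton]
        exact n6),
      Finset.card_singleton]
  have hPoDisj : ∀ q1 ∈ Po, ∀ q2 ∈ Po, q1 ≠ q2 → Disjoint (id q1) (id q2) := by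
    intro q1 hq1 q2 hq2 hne12
    rw [Finset.disjoint_left]
    intro v hv1 hv2
    have hvO : v ∈ O := by
      obtain ⟨y1, _, rfl⟩ := Finset.mem_image.mp hq1
      exact hQsubO y1 hv1
    obtain ⟨q, _, huq⟩ := hPoU v hvO
    exact hne12 ((huq q1 ⟨hq1, hv1⟩).trans (huq q2 ⟨hq2, hv2⟩).symm)
  have hPoCard : Po.card = m := by
    have hsum : O.card = ∑ q ∈ Po, (id q).card := by
      rw [hObiU, Finset.card_biUnion hPoDisj]
    have hsum4 : ∑ q ∈ Po, (id q).card = 4 * Po.card := by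
      rw [Finset.sum_congr rfl (fun q hq => ?_), Finset.sum_const, smul_eq_mul, mul_comm]
      obtain ⟨y1, hy1, rfl⟩ := Finset.mem_image.mp hq
      exact hQcard y1 hy1
    rw [hOcard, hnm] at hsum
    omega
  refine ⟨m, O, Po, hm, by rw [hOcard, hnm], hxO, hOcl, hOmin, hPoCard, ?_, hPoU⟩
  intro q hq
  obtain ⟨y1, hy1, rfl⟩ := Finset.mem_image.mp hq
  refine ⟨hQsubO y1, ?_, hQP4 y1⟩
  refine ⟨uu y1, ?_⟩
  simp only [hQ, Finset.mem_insert]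
  tauto

lemma gibbs_aux {V : Type*} [Fintype V] {G : SimpleGraph V} {σ : Equiv.Perm V}
    (h : AntiPerm G σ) : ∀ (k : ℕ) (S : Finset V), (∀ w ∈ S, σ w ∈ S) → S.card = 4 * k →
    ∃ P : Finset (Finset V), P.card = k ∧ (∀ q ∈ P, q ⊆ S ∧ InducesP4 G ↑q) ∧
      (∀ v ∈ S, ∃! q, q ∈ P ∧ v ∈ q) := by
  classical
  intro k
  induction k using Nat.strong_induction_on with
  | _ k IH =>
    intro S hS hcard
    rcases Nat.eq_zero_or_pos k with rfl | hk
    · have hSempty : S = ∅ := Finset.card_eq_zero.mp (by omega)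
      subst hSempty
      exact ⟨∅, rfl, by simp, by simp⟩
    · have hSne : ∃ x ∈ S, σ x ≠ x := by
        by_contra hall
        push_neg at hall
        have h2 : 1 < S.card := by omega
        obtain ⟨a, ha, b, hb, hab⟩ := Finset.one_lt_card.mp h2
        have hiff := h a b hab
        rw [hall a ha, hall b hb] at hiff
        tauto
      obtain ⟨x, hxS, hxfix⟩ := hSne
      obtain ⟨m, O, Po, hm, hOcard, hxO, hOcl, hOmin, hPoCard, hPoQ, hPoU⟩ :=
        orbit_partition h x hxfix
      have hOS : O ⊆ S := hOmin S hxS hS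
      have hmk : m ≤ k := by
        have := Finset.card_le_card hOS
        omega
      have hS'cl : ∀ w ∈ S \ O, σ w ∈ S \ O := by
        intro w hw
        rw [Finset.mem_sdiff] at hw ⊢
        refine ⟨hS w hw.1, fun hcon => hw.2 ?_⟩
        have himg : O.image σ = O := by
          apply Finset.eq_of_subset_of_card_le
          · intro v hv
            obtain ⟨u0, hu0, rfl⟩ := Finset.mem_image.mp hv
            exact hOcl u0 hu0
          · rw [Finset.card_image_of_injective O σ.injective]
        rw [← himg] at hcon
        obtain ⟨u0, hu0, he⟩ := Finset.mem_image.mp hcon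
        rwa [← σ.injective he]
      have hS'card : (S \ O).card = 4 * (k - m) := by
        rw [Finset.card_sdiff_of_subset hOS]
        omega
      obtain ⟨P', hP'card, hP'Q, hP'U⟩ := IH (k - m) (by omega) (S \ O) hS'cl hS'card
      have hdisj : Disjoint P' Po := by
        rw [Finset.disjoint_left]
        intro q hq1 hq2
        obtain ⟨v, hv⟩ := (hPoQ q hq2).2.1
        have hv1 : v ∈ S \ O := (hP'Q q hq1).1 hv
        have hv2 : v ∈ O := (hPoQ q hq2).1 hv
        rw [Finset.mem_sdiff] at hv1
        exact hv1.2 hv2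
      refine ⟨P' ∪ Po, ?_, ?_, ?_⟩
      · rw [Finset.card_union_of_disjoint hdisj]
        omega
      · intro q hq
        rcases Finset.mem_union.mp hq with hq' | hq'
        · exact ⟨(hP'Q q hq').1.trans (Finset.sdiff_subset), (hP'Q q hq').2⟩
        · exact ⟨(hPoQ q hq').1.trans hOS, (hPoQ q hq').2.2⟩
      · intro v hv
        by_cases hvO : v ∈ O
        · obtain ⟨q, ⟨hqPo, hvq⟩, huniq⟩ := hPoU v hvO
          refine ⟨q, ⟨Finset.mem_union_right _ hqPo, hvq⟩, ?_⟩
          rintro q' ⟨hq', hvq'⟩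
          rcases Finset.mem_union.mp hq' with hq'' | hq''
          · exfalso
            have := (hP'Q q' hq'').1 hvq'
            rw [Finset.mem_sdiff] at this
            exact this.2 hvO
          · exact huniq q' ⟨hq'', hvq'⟩
        · have hvS' : v ∈ S \ O := Finset.mem_sdiff.mpr ⟨hv, hvO⟩
          obtain ⟨q, ⟨hqP', hvq⟩, huniq⟩ := hP'U v hvS'
          refine ⟨q, ⟨Finset.mem_union_left _ hqP', hvq⟩, ?_⟩
          rintro q' ⟨hq', hvq'⟩
          rcases Finset.mem_union.mp hq' with hq'' | hq''
          · exact huniq q' ⟨hq'', hvq'⟩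
          · exfalso
            exact hvO ((hPoQ q' hq'').1 hvq')

/-- Gibbs' theorem: a self-complementary graph on `4k` vertices can be partitioned
into `k` sets each inducing a path on 4 vertices. -/
theorem gibbs_theorem {V : Type*} [Fintype V] (G : SimpleGraph V)
    (hsc : SelfComplementary G) (k : ℕ) (hcard : Fintype.card V = 4 * k) :
    ∃ P : Finset (Finset V), P.card = k ∧ (∀ p ∈ P, InducesP4 G ↑p) ∧
      (∀ v : V, ∃! p, p ∈ P ∧ v ∈ p) := by
  obtain ⟨φ⟩ := hsc
  have hanti : AntiPerm G φ.toEquiv := by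
    intro u v huv
    have h1 : (Gᶜ).Adj (φ u) (φ v) ↔ G.Adj u v := φ.map_adj_iff
    rw [SimpleGraph.compl_adj] at h1
    have hne : φ u ≠ φ v := fun e => huv (φ.toEquiv.injective e)
    tauto
  obtain ⟨P, hP1, hP2, hP3⟩ := gibbs_aux hanti k Finset.univ (by simp)
    (by simpa using hcard)
  exact ⟨P, hP1, fun p hp => (hP2 p hp).2, fun v => hP3 v (Finset.mem_univ v)⟩
end

section
/- If (A,B,C,D) is a symmetric partition of a self-complementary graph G arising from an antimorphism τ mapping A→B→C→D→A (so that τ^4 stabilizes each part), then for all indices i, j, l the set {a_i, b_{i+j}, c_l, d_{l+j}} induces a P_4, where a_m = τ^{4(m-1)}(a_1) etc. -/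
/-- A symmetric partition of the whole graph `G`. -/
def IsSymmetricPartition {V : Type*} (G : SimpleGraph V) (A B C D : Set V) : Prop :=
  IsSymmetricPartitionOn G A B C D ∧ A ∪ B ∪ C ∪ D = Set.univ

theorem symmetricPartition_inducesP4 {V : Type*} (G : SimpleGraph V) (τ : Equiv.Perm V)
    (hτ : IsAntimorphism G τ) (k : ℕ) (hk : 1 ≤ k) (a b c d : ZMod k → V)
    (hinj : Function.Injective (fun p : Fin 4 × ZMod k => ![a, b, c, d] p.1 p.2))
    (hab : ∀ i, τ (a i) = b i) (hbc : ∀ i, τ (b i) = c i)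
    (hcd : ∀ i, τ (c i) = d i) (hda : ∀ i, τ (d i) = a (i + 1))
    (hsym : IsSymmetricPartition G (Set.range a) (Set.range b) (Set.range c) (Set.range d)) :
    ∀ i j l : ZMod k, InducesP4 G {a i, b (i + j), c l, d (l + j)} := by
  intro i j l
  obtain ⟨⟨-, -, -, -, -, -, -, -, -, -, hAB, hCD, hAD, hBC⟩, -⟩ := hsym
  have memA : ∀ m, a m ∈ Set.range a := fun m => ⟨m, rfl⟩
  have memB : ∀ m, b m ∈ Set.range b := fun m => ⟨m, rfl⟩
  have memC : ∀ m, c m ∈ Set.range c := fun m => ⟨m, rfl⟩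
  have memD : ∀ m, d m ∈ Set.range d := fun m => ⟨m, rfl⟩
  have hne : ∀ (p q : Fin 4) (m n : ZMod k), p ≠ q →
      ![a, b, c, d] p m ≠ ![a, b, c, d] q n := by
    intro p q m n hpq h
    exact hpq (congrArg Prod.fst (hinj (a₁ := (p, m)) (a₂ := (q, n)) h))
  have hab' : ∀ m n : ZMod k, a m ≠ b n := fun m n =>
    hne 0 1 m n (by decide)
  have hac : ∀ m n : ZMod k, a m ≠ c n := fun m n => hne 0 2 m n (by decide)
  have had : ∀ m n : ZMod k, a m ≠ d n := fun m n => hne 0 3 m n (by decide)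
  have hbc' : ∀ m n : ZMod k, b m ≠ c n := fun m n => hne 1 2 m n (by decide)
  have hbd : ∀ m n : ZMod k, b m ≠ d n := fun m n => hne 1 3 m n (by decide)
  have hcd' : ∀ m n : ZMod k, c m ≠ d n := fun m n => hne 2 3 m n (by decide)
  have key : ∀ x y : V, x ≠ y → (G.Adj x y ↔ G.Adj (τ (τ x)) (τ (τ y))) := by
    intro x y h
    rw [hτ x y h, hτ (τ x) (τ y) (fun e => h (τ.injective e)), not_not]
  -- step: shift both indices by 1
  have step : ∀ m n : ZMod k, G.Adj (a m) (c n) ↔ G.Adj (a (m + 1)) (c (n + 1)) := by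
    intro m n
    have h1 : G.Adj (a m) (c n) ↔ G.Adj (c m) (a (n + 1)) := by
      have := key (a m) (c n) (hac m n)
      rwa [hab m, hbc m, hcd n, hda n] at this
    have h2 : G.Adj (c m) (a (n + 1)) ↔ G.Adj (a (m + 1)) (c (n + 1)) := by
      have := key (c m) (a (n + 1)) (Ne.symm (hac (n + 1) m))
      rwa [hcd m, hda m, hab (n + 1), hbc (n + 1)] at this
    exact h1.trans h2
  have shift : ∀ (t : ℕ) (m n : ZMod k),
      G.Adj (a m) (c n) ↔ G.Adj (a (m + t)) (c (n + t)) := by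
    intro t
    induction t with
    | zero => simp
    | succ s ih =>
      intro m n
      have := (ih m n).trans (step (m + s) (n + s))
      push_cast
      convert this using 3 <;> ring
  haveI : NeZero k := ⟨by omega⟩
  have shiftj : G.Adj (a i) (c l) ↔ G.Adj (a (i + j)) (c (l + j)) := by
    have := shift j.val i l
    rwa [ZMod.natCast_val, ZMod.cast_id] at this
  have hbd_iff : G.Adj (b (i + j)) (d (l + j)) ↔ ¬ G.Adj (a i) (c l) := by
    rw [shiftj, hτ (a (i + j)) (c (l + j)) (hac _ _), hab, hcd, not_not]
  by_cases hadj : G.Adj (a i) (c l)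
  · refine ⟨b (i + j), a i, c l, d (l + j), ?_, Ne.symm (hab' _ _), hbc' _ _, hbd _ _,
      hac _ _, had _ _, hcd' _ _, (hAB _ (memA i) _ (memB _)).symm, hadj,
      hCD _ (memC l) _ (memD _), hBC _ (memB _) _ (memC l),
      hbd_iff.not.mpr (not_not.mpr hadj) ∘ id, hAD _ (memA i) _ (memD _)⟩
    ext x; simp only [Set.mem_insert_iff, Set.mem_singleton_iff]; tauto
  · refine ⟨a i, b (i + j), d (l + j), c l, ?_, hab' _ _, had _ _, hac _ _,
      hbd _ _, hbc' _ _, Ne.symm (hcd' _ _), hAB _ (memA i) _ (memB _),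
      hbd_iff.mpr hadj, (hCD _ (memC l) _ (memD _)).symm,
      hAD _ (memA i) _ (memD _), hadj, hBC _ (memB _) _ (memC l)⟩
    ext x; simp only [Set.mem_insert_iff, Set.mem_singleton_iff]; tauto
end

section
/- Let G be a self-complementary graph with antimorphism τ = (a b c d)(a_1 b_1 c_1 d_1 ... a_k b_k c_k d_k), where the edges of G among {a,b,c,d} are exactly ab, ac, cd. If a is adjacent to no vertex outside {a,b,c,d}, then {a_1, a, b, c, d} induces a C_5 in G. -/
/-- `v` lists the vertices of an induced 5-cycle of `G`, in cyclic order. -/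
def IsInducedC5 {V : Type*} (G : SimpleGraph V) (v : Fin 5 → V) : Prop :=
  Function.Injective v ∧
    ∀ i j : Fin 5, i ≠ j → (G.Adj (v i) (v j) ↔ (j = i + 1 ∨ i = j + 1))

theorem case_Na_empty {V : Type*} (G : SimpleGraph V) (τ : Equiv.Perm V)
    (hτ : IsAntimorphism G τ)
    (a b c d : V) (habcd : [a, b, c, d].Nodup)
    (h1 : τ a = b) (h2 : τ b = c) (h3 : τ c = d) (h4 : τ d = a)
    (k : ℕ) (hk : 1 ≤ k) (a' b' c' d' : ZMod k → V)
    (hinj : Function.Injective (fun p : Fin 4 × ZMod k => ![a', b', c', d'] p.1 p.2))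
    (hab : ∀ i, τ (a' i) = b' i) (hbc : ∀ i, τ (b' i) = c' i)
    (hcd : ∀ i, τ (c' i) = d' i) (hda : ∀ i, τ (d' i) = a' (i + 1))
    (hdisj : ∀ p : Fin 4 × ZMod k, ![a', b', c', d'] p.1 p.2 ∉ ({a, b, c, d} : Set V))
    (hcover : ∀ v : V, v ∈ ({a, b, c, d} : Set V) ∨
      ∃ p : Fin 4 × ZMod k, ![a', b', c', d'] p.1 p.2 = v)
    (eab : G.Adj a b) (eac : G.Adj a c) (ecd : G.Adj c d)
    (nad : ¬ G.Adj a d) (nbc : ¬ G.Adj b c) (nbd : ¬ G.Adj b d)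
    (hNa : ∀ v : V, v ∉ ({a, b, c, d} : Set V) → ¬ G.Adj a v) :
    ∃ v : Fin 5 → V, IsInducedC5 G v ∧ Set.range v = {a' 0, a, b, c, d} := by
  simp only [List.nodup_cons, List.mem_cons, List.not_mem_nil, or_false,
    List.mem_singleton, not_or, List.nodup_nil, and_true] at habcd
  obtain ⟨⟨hab', hac', had'⟩, ⟨hbc', hbd'⟩, hcd'⟩ := habcd
  have ha1 := hdisj (0, 0)
  simp only [Matrix.cons_val_zero, Set.mem_insert_iff, Set.mem_singleton_iff, not_or] at ha1
  obtain ⟨h1a, h1b, h1c, h1d⟩ := ha1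
  -- b is adjacent to everything except b, c, d
  have hbAll : ∀ y, y ≠ b → y ≠ c → y ≠ d → G.Adj b y := by
    intro y hyb hyc hyd
    by_cases hya : y = a
    · subst hya; exact eab.symm
    · have hxy : τ (τ.symm y) = y := τ.apply_symm_apply y
      set x := τ.symm y with hx
      have hxa : x ≠ a := fun h => hyb (by rw [← hxy, h, h1])
      have hxb : x ≠ b := fun h => hyc (by rw [← hxy, h, h2])
      have hxc : x ≠ c := fun h => hyd (by rw [← hxy, h, h3])
      have hxd : x ≠ d := fun h => hya (by rw [← hxy, h, h4])
      have hnx : ¬ G.Adj a x := hNa x (by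
        simp only [Set.mem_insert_iff, Set.mem_singleton_iff, not_or]
        exact ⟨hxa, hxb, hxc, hxd⟩)
      have h := (not_congr (hτ a x (Ne.symm hxa))).mp hnx
      rw [h1, hxy] at h
      exact not_not.mp h
  -- c is adjacent to nothing except a, d
  have hcNone : ∀ y, y ≠ a → y ≠ c → y ≠ d → ¬ G.Adj c y := by
    intro y hya hyc hyd
    have hxy : τ (τ.symm y) = y := τ.apply_symm_apply y
    set x := τ.symm y with hx
    have hxb : x ≠ b := fun h => hyc (by rw [← hxy, h, h2])
    have hxc : x ≠ c := fun h => hyd (by rw [← hxy, h, h3])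
    have hxd : x ≠ d := fun h => hya (by rw [← hxy, h, h4])
    have h := (hτ b x (Ne.symm hxb)).mp (hbAll x hxb hxc hxd)
    rwa [h2, hxy] at h
  -- d is adjacent to everything except a, b, d
  have hdAll : ∀ y, y ≠ a → y ≠ b → y ≠ d → G.Adj d y := by
    intro y hya hyb hyd
    by_cases hyc : y = c
    · subst hyc; exact ecd.symm
    · have hxy : τ (τ.symm y) = y := τ.apply_symm_apply y
      set x := τ.symm y with hx
      have hxa : x ≠ a := fun h => hyb (by rw [← hxy, h, h1])
      have hxc : x ≠ c := fun h => hyd (by rw [← hxy, h, h3])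
      have hxd : x ≠ d := fun h => hya (by rw [← hxy, h, h4])
      have h := (not_congr (hτ c x (Ne.symm hxc))).mp (hcNone x hxa hxc hxd)
      rw [h3, hxy] at h
      exact not_not.mp h
  set a₁ := a' 0 with ha₁
  have eba1 : G.Adj b a₁ := hbAll a₁ (Ne.symm (fun h => h1b h.symm)) h1c h1d
  have eda1 : G.Adj d a₁ := hdAll a₁ h1a h1b h1d
  have nca1 : ¬ G.Adj c a₁ := hcNone a₁ h1a h1c h1d
  have naa1 : ¬ G.Adj a a₁ := hNa a₁ (by
    simp only [Set.mem_insert_iff, Set.mem_singleton_iff, not_or]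
    exact ⟨h1a, h1b, h1c, h1d⟩)
  have hinj5 : Function.Injective ![a, b, a₁, d, c] := by
    clear hτ hinj hab hbc hcd hda hdisj hcover hNa hbAll hcNone hdAll
    clear eab eac ecd nad nbc nbd eba1 eda1 nca1 naa1 hk
    intro i j hij
    fin_cases i <;> fin_cases j <;> simp_all
  refine ⟨![a, b, a₁, d, c], ⟨hinj5, ?_⟩, ?_⟩
  · intro i j hij
    fin_cases i <;> fin_cases j <;>
      simp only [Matrix.cons_val_zero, Matrix.cons_val_one, Matrix.head_cons,
        Matrix.cons_val_two, Matrix.tail_cons, Matrix.cons_val_three, Matrix.cons_val_four] <;>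
      first
      | (exact absurd rfl hij)
      | (constructor
         · intro h
           first
           | decide
           | (exact absurd h nad) | (exact absurd h.symm nad)
           | (exact absurd h nbc) | (exact absurd h.symm nbc)
           | (exact absurd h nbd) | (exact absurd h.symm nbd)
           | (exact absurd h naa1) | (exact absurd h.symm naa1)
           | (exact absurd h nca1) | (exact absurd h.symm nca1)
         · intro h
           first
           | (exact eab) | (exact eab.symm)
           | (exact eac) | (exact eac.symm)
           | (exact ecd) | (exact ecd.symm)
           | (exact eba1) | (exact eba1.symm)
           | (exact eda1) | (exact eda1.symm)
           | (exact absurd h (by decide)))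
  · ext x
    simp only [Set.mem_range, Set.mem_insert_iff, Set.mem_singleton_iff]
    constructor
    · rintro ⟨i, rfl⟩
      fin_cases i <;> simp
    · rintro (rfl | rfl | rfl | rfl | rfl)
      · exact ⟨2, rfl⟩
      · exact ⟨0, rfl⟩
      · exact ⟨1, rfl⟩
      · exact ⟨4, rfl⟩
      · exact ⟨3, rfl⟩
end

section
/- Let G be a self-complementary graph with antimorphism τ having a cycle of length 4k: (a_1 b_1 c_1 d_1 ... a_k b_k c_k d_k), and let A, B, C, D be the corresponding sets of a's, b's, c's, d's. If every vertex of A is adjacent to every vertex of B, then (A,B,C,D) is a symmetric partition of the induced subgraph G[A∪B∪C∪D]. -/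
theorem all_edges_AB_symmetricPartition {V : Type*} (G : SimpleGraph V) (τ : Equiv.Perm V)
    (hτ : IsAntimorphism G τ) (k : ℕ) (hk : 1 ≤ k) (a b c d : ZMod k → V)
    (hinj : Function.Injective (fun p : Fin 4 × ZMod k => ![a, b, c, d] p.1 p.2))
    (hab : ∀ i, τ (a i) = b i) (hbc : ∀ i, τ (b i) = c i)
    (hcd : ∀ i, τ (c i) = d i) (hda : ∀ i, τ (d i) = a (i + 1))
    (hAB : ∀ i j : ZMod k, G.Adj (a i) (b j)) :
    IsSymmetricPartitionOn G (Set.range a) (Set.range b) (Set.range c) (Set.range d) := by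
  have hne : Nonempty (ZMod k) := ⟨0⟩
  have hd : ∀ (p q : Fin 4) (i j : ZMod k), p ≠ q → ![a, b, c, d] p i ≠ ![a, b, c, d] q j := by
    intro p q i j hpq h
    exact hpq (congrArg Prod.fst (hinj (a₁ := (p, i)) (a₂ := (q, j)) h))
  have hab' : ∀ i j : ZMod k, a i ≠ b j := fun i j => hd 0 1 i j (by decide)
  have hbc' : ∀ i j : ZMod k, b i ≠ c j := fun i j => hd 1 2 i j (by decide)
  have hcd' : ∀ i j : ZMod k, c i ≠ d j := fun i j => hd 2 3 i j (by decide)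
  have hac' : ∀ i j : ZMod k, a i ≠ c j := fun i j => hd 0 2 i j (by decide)
  have had' : ∀ i j : ZMod k, a i ≠ d j := fun i j => hd 0 3 i j (by decide)
  have hbd' : ∀ i j : ZMod k, b i ≠ d j := fun i j => hd 1 3 i j (by decide)
  have hBC : ∀ i j : ZMod k, ¬ G.Adj (b i) (c j) := by
    intro i j
    have h := (hτ (a i) (b j) (hab' i j)).mp (hAB i j)
    rwa [hab i, hbc j] at h
  have hCD : ∀ i j : ZMod k, G.Adj (c i) (d j) := by
    intro i j
    have h := mt (hτ (b i) (c j) (hbc' i j)).mpr (hBC i j)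
    rw [hbc, hcd] at h
    exact not_not.mp h
  have hDA : ∀ i j : ZMod k, ¬ G.Adj (d i) (a (j + 1)) := by
    intro i j
    have h := (hτ (c i) (d j) (hcd' i j)).mp (hCD i j)
    rwa [hcd, hda] at h
  have hAD : ∀ i j : ZMod k, ¬ G.Adj (a i) (d j) := by
    intro i j h
    have := hDA j (i - 1)
    rw [sub_add_cancel] at this
    exact this h.symm
  refine ⟨Set.range_nonempty a, Set.range_nonempty b, Set.range_nonempty c,
    Set.range_nonempty d, ?_, ?_, ?_, ?_, ?_, ?_, ?_, ?_, ?_, ?_⟩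
  · rw [Set.disjoint_left]; rintro x ⟨i, rfl⟩ ⟨j, hj⟩; exact hab' i j hj.symm
  · rw [Set.disjoint_left]; rintro x ⟨i, rfl⟩ ⟨j, hj⟩; exact hac' i j hj.symm
  · rw [Set.disjoint_left]; rintro x ⟨i, rfl⟩ ⟨j, hj⟩; exact had' i j hj.symm
  · rw [Set.disjoint_left]; rintro x ⟨i, rfl⟩ ⟨j, hj⟩; exact hbc' i j hj.symm
  · rw [Set.disjoint_left]; rintro x ⟨i, rfl⟩ ⟨j, hj⟩; exact hbd' i j hj.symm
  · rw [Set.disjoint_left]; rintro x ⟨i, rfl⟩ ⟨j, hj⟩; exact hcd' i j hj.symm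
  · rintro x ⟨i, rfl⟩ y ⟨j, rfl⟩; exact hAB i j
  · rintro x ⟨i, rfl⟩ y ⟨j, rfl⟩; exact hCD i j
  · rintro x ⟨i, rfl⟩ y ⟨j, rfl⟩; exact hAD i j
  · rintro x ⟨i, rfl⟩ y ⟨j, rfl⟩; exact hBC i j
end

section
/- Let G be a self-complementary graph with an antimorphism τ = (a b c d)(a_1 b_1 c_1 d_1 ... a_k b_k c_k d_k) and let v ∈ {a,b,c,d} and H be one of the sets A = {a_i}, B = {b_i}, C = {c_i}, D = {d_i}. Then either v is adjacent to every vertex of H, or v is adjacent to no vertex of H. -/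
theorem fixed_cycle_sees_all_or_none {V : Type*} (G : SimpleGraph V) (τ : Equiv.Perm V)
    (hτ : IsAntimorphism G τ)
    (a b c d : V) (habcd : [a, b, c, d].Nodup)
    (h1 : τ a = b) (h2 : τ b = c) (h3 : τ c = d) (h4 : τ d = a)
    (k : ℕ) (hk : 1 ≤ k) (a' b' c' d' : ZMod k → V)
    (hinj : Function.Injective (fun p : Fin 4 × ZMod k => ![a', b', c', d'] p.1 p.2))
    (hab : ∀ i, τ (a' i) = b' i) (hbc : ∀ i, τ (b' i) = c' i)
    (hcd : ∀ i, τ (c' i) = d' i) (hda : ∀ i, τ (d' i) = a' (i + 1))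
    (hdisj : ∀ p : Fin 4 × ZMod k, ![a', b', c', d'] p.1 p.2 ∉ ({a, b, c, d} : Set V)) :
    ∀ v ∈ ({a, b, c, d} : Set V),
      ∀ H ∈ ({Set.range a', Set.range b', Set.range c', Set.range d'} : Set (Set V)),
        (∀ x ∈ H, G.Adj v x) ∨ (∀ x ∈ H, ¬ G.Adj v x) := by
  haveI : NeZero k := ⟨by omega⟩
  intro v hv
  -- τ⁴ preserves adjacency on distinct pairs
  have key : ∀ (x y : V), x ≠ y →
      (G.Adj x y ↔ G.Adj (τ (τ (τ (τ x)))) (τ (τ (τ (τ y))))) := by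
    intro x y h
    have e1 := hτ x y h
    have e2 := hτ (τ x) (τ y) (fun e => h (τ.injective e))
    have e3 := hτ (τ (τ x)) (τ (τ y)) (fun e => h (τ.injective (τ.injective e)))
    have e4 := hτ (τ (τ (τ x))) (τ (τ (τ y)))
      (fun e => h (τ.injective (τ.injective (τ.injective e))))
    tauto
  -- τ⁴ fixes v
  have hv4 : τ (τ (τ (τ v))) = v := by
    simp only [Set.mem_insert_iff, Set.mem_singleton_iff] at hv
    rcases hv with rfl | rfl | rfl | rfl
    · rw [h1, h2, h3, h4]
    · rw [h2, h3, h4, h1]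
    · rw [h3, h4, h1, h2]
    · rw [h4, h1, h2, h3]
  -- generic argument for a range
  have stepgen : ∀ (f : ZMod k → V), (∀ i, v ≠ f i) →
      (∀ i, τ (τ (τ (τ (f i)))) = f (i + 1)) →
      (∀ x ∈ Set.range f, G.Adj v x) ∨ (∀ x ∈ Set.range f, ¬ G.Adj v x) := by
    intro f hne hcyc
    have hstep : ∀ i, G.Adj v (f i) ↔ G.Adj v (f (i + 1)) := by
      intro i
      rw [key v (f i) (hne i), hv4, hcyc]
    have hn : ∀ (n : ℕ) (i : ZMod k), G.Adj v (f i) ↔ G.Adj v (f (i + (n : ZMod k))) := by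
      intro n
      induction n with
      | zero => simp
      | succ m ih =>
          intro i
          rw [ih i, hstep (i + (m : ZMod k))]
          push_cast
          ring_nf
    have hconst : ∀ i j, G.Adj v (f i) ↔ G.Adj v (f j) := by
      intro i j
      have := hn (j - i).val i
      rwa [ZMod.natCast_val, ZMod.cast_id, add_sub_cancel] at this
    by_cases h0 : G.Adj v (f 0)
    · left; rintro x ⟨i, rfl⟩; exact (hconst 0 i).mp h0
    · right; rintro x ⟨i, rfl⟩ ha; exact h0 ((hconst i 0).mp ha)
  have hnev : ∀ (p : Fin 4 × ZMod k), v ≠ ![a', b', c', d'] p.1 p.2 := fun p e =>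
    hdisj p (e ▸ hv)
  intro H hH
  simp only [Set.mem_insert_iff, Set.mem_singleton_iff] at hH
  rcases hH with rfl | rfl | rfl | rfl
  · refine stepgen a' (fun i => by simpa using hnev (0, i)) (fun i => ?_)
    rw [hab, hbc, hcd, hda]
  · refine stepgen b' (fun i => by simpa using hnev (1, i)) (fun i => ?_)
    rw [hbc, hcd, hda, hab]
  · refine stepgen c' (fun i => by simpa using hnev (2, i)) (fun i => ?_)
    rw [hcd, hda, hab, hbc]
  · refine stepgen d' (fun i => by simpa using hnev (3, i)) (fun i => ?_)
    rw [hda, hab, hbc, hcd]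
end

section
/- Let G be a self-complementary graph whose antimorphism τ is the product of a 4-cycle (a b c d) and one other cycle, where the edges of G among {a,b,c,d} are exactly ab, ac, cd. If a is adjacent to every vertex outside {a,b,c,d}, then ({b}, {d}, {a,c}, V(G) \ {a,b,c,d}) is a skew partition of G. -/
def IsSkewPartition {V : Type*} (G : SimpleGraph V) (A B C D : Set V) : Prop :=
  (A.Nonempty ∧ B.Nonempty ∧ C.Nonempty ∧ D.Nonempty ∧
   Disjoint A B ∧ Disjoint A C ∧ Disjoint A D ∧ Disjoint B C ∧ Disjoint B D ∧ Disjoint C D ∧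
   (∀ x ∈ A, ∀ y ∈ B, ¬ G.Adj x y) ∧ (∀ x ∈ C, ∀ y ∈ D, G.Adj x y)) ∧
  A ∪ B ∪ C ∪ D = Set.univ

theorem case_Na_all {V : Type*} (G : SimpleGraph V) (τ : Equiv.Perm V)
    (hτ : IsAntimorphism G τ)
    (a b c d : V) (habcd : [a, b, c, d].Nodup)
    (h1 : τ a = b) (h2 : τ b = c) (h3 : τ c = d) (h4 : τ d = a)
    (m : ℕ) (hm : 1 ≤ m) (e : ZMod m → V) (he : Function.Injective e)
    (hec : ∀ i, τ (e i) = e (i + 1))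
    (hdisj : ∀ i, e i ∉ ({a, b, c, d} : Set V))
    (hcover : ∀ v : V, v ∈ ({a, b, c, d} : Set V) ∨ v ∈ Set.range e)
    (eab : G.Adj a b) (eac : G.Adj a c) (ecd : G.Adj c d)
    (nad : ¬ G.Adj a d) (nbc : ¬ G.Adj b c) (nbd : ¬ G.Adj b d)
    (hNa : ∀ v : V, v ∉ ({a, b, c, d} : Set V) → G.Adj a v) :
    IsSkewPartition G {b} {d} {a, c} (Set.univ \ {a, b, c, d}) := by
  simp only [List.nodup_cons, List.mem_cons, List.not_mem_nil, or_false, not_or] at habcd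
  obtain ⟨⟨hab, hac, had⟩, ⟨hbc, hbd⟩, hcd, -⟩ := habcd
  have hne : ∀ i, ∀ v ∈ ({a, b, c, d} : Set V), v ≠ e i := by
    intro i v hv heq
    exact hdisj i (heq ▸ hv)
  have hnb : ∀ i, ¬ G.Adj b (e i) := by
    intro i hadj
    have hne' : a ≠ e (i - 1) := hne (i - 1) a (by simp)
    have := (hτ a (e (i - 1)) hne').mp (hNa _ (hdisj _))
    rw [h1, hec, sub_add_cancel] at this
    exact this hadj
  have hnc : ∀ i, G.Adj c (e i) := by
    intro i
    have hne' : b ≠ e (i - 1) := hne (i - 1) b (by simp)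
    have := mt ((hτ b (e (i - 1)) hne').mpr) (hnb _)
    rw [h2, hec, sub_add_cancel, not_not] at this
    exact this
  constructor
  · refine ⟨⟨b, rfl⟩, ⟨d, rfl⟩, ⟨a, by simp⟩, ⟨e 0, by simp [hdisj 0]⟩, ?_, ?_, ?_, ?_, ?_, ?_, ?_, ?_⟩
    · simp [Set.disjoint_singleton, hbd]
    · simp [Ne.symm hab, hbc]

    · simp [Set.disjoint_left]
    · simp [Set.disjoint_singleton_left, hac, Ne.symm hcd]
      exact Ne.symm had
    · simp [Set.disjoint_left]
    · rw [Set.disjoint_left]; rintro x (rfl | rfl) hx <;> simp at hx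
    · rintro x rfl y rfl; exact nbd
    · rintro x hx y hy
      rcases hcover y with hy' | ⟨i, rfl⟩
      · exact absurd hy' hy.2
      · rcases hx with rfl | rfl
        · exact hNa _ (hdisj i)
        · exact hnc i
  · ext v
    rcases hcover v with hv | ⟨i, rfl⟩
    · rcases hv with rfl | rfl | rfl | rfl <;> simp
    · simp [hdisj i]
end
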